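/- arXiv:2004.08169 — 5 statements merged into one kernel-verified Lean document; each statement's English description precedes it below -/
import Mathlib

section
/- Let n ≥ 2 and let f : ℝⁿ → ℝ be of class C² satisfying the linear growth condition a₁|ξ| − a₂ ≤ f(ξ) ≤ a₃|ξ| + a₄ for all ξ ∈ ℝⁿ (with constants a₁, a₃ > 0, a₂, a₄ ≥ 0) and the ellipticity condition c₁(1+|ξ|)^{−μ}|η|² ≤ D²f(ξ)(η,η) ≤ c₂(1+|ξ|)^{−κ}|η|² for all ξ, η ∈ ℝⁿ, with constants c₁, c₂ > 0 and exponents μ > 1 and κ ≤ μ. Then κ ≤ 1. -/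
open Real MeasureTheory

lemma half_le_of_sq (t N u v : ℝ) (ht : 0 < t) (hN : 0 ≤ N) (huv : u + v = 1)
    (h : N ^ 2 = (u * t) ^ 2 + (v * t) ^ 2) : t / 2 ≤ N := by
  have hc : (u + v) ^ 2 * t ^ 2 = t ^ 2 := by rw [huv]; ring
  have key : t ^ 2 ≤ 2 * N ^ 2 := by
    nlinarith [hc, mul_nonneg (sq_nonneg (u - v)) (sq_nonneg t)]
  have hpos : 0 < t / 2 + N := by linarith
  nlinarith

lemma le_two_mul_of_sq (t N : ℝ) (ht : 0 < t) (hN : 0 ≤ N)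
    (h : N ^ 2 = t ^ 2 + t ^ 2) : N ≤ 2 * t := by
  nlinarith

lemma bilin_cs {E : Type*} [NormedAddCommGroup E] [NormedSpace ℝ E]
    (B : E →L[ℝ] E →L[ℝ] ℝ) (M : ℝ) (hM : 0 ≤ M)
    (hsymm : ∀ v w, B v w = B w v) (h0 : ∀ v, 0 ≤ B v v)
    (hub : ∀ v, B v v ≤ M * ‖v‖ ^ 2) (v w : E) : |B v w| ≤ M * ‖v‖ * ‖w‖ := by
  have key : ∀ t : ℝ, 0 ≤ B w w * (t * t) + 2 * B v w * t + B v v := by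
    intro t
    have h := h0 (v + t • w)
    simp only [map_add, _root_.map_smul, ContinuousLinearMap.add_apply,
      ContinuousLinearMap.smul_apply, smul_eq_mul] at h
    rw [hsymm w v] at h
    ring_nf at h ⊢
    linarith
  have hd := discrim_le_zero key
  rw [discrim] at hd
  have h1 : B v w ^ 2 ≤ B w w * B v v := by nlinarith
  have h2 := hub w
  have h3 := hub v
  have hsq : B v w ^ 2 ≤ (M * ‖v‖ * ‖w‖) ^ 2 := by
    nlinarith [h0 v, h0 w, norm_nonneg v, norm_nonneg w, sq_nonneg ‖v‖, sq_nonneg ‖w‖,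
      mul_nonneg (mul_nonneg hM (norm_nonneg v)) (norm_nonneg w)]
  have hrhs : 0 ≤ M * ‖v‖ * ‖w‖ := by positivity
  rw [abs_le]
  constructor <;> nlinarith

set_option maxHeartbeats 1000000 in
/-- If `f : ℝⁿ → ℝ` (`n ≥ 2`) is `C²`, of linear growth, and satisfies the
`μ`-ellipticity condition with upper exponent `κ ≤ μ`, `μ > 1`, then `κ ≤ 1`. -/
theorem kappa_le_one (n : ℕ) (hn : 2 ≤ n)
    (f : EuclideanSpace ℝ (Fin n) → ℝ) (hf : ContDiff ℝ 2 f)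
    (a₁ a₂ a₃ a₄ : ℝ) (ha₁ : 0 < a₁) (ha₂ : 0 ≤ a₂) (ha₃ : 0 < a₃) (ha₄ : 0 ≤ a₄)
    (hgrowth : ∀ ξ : EuclideanSpace ℝ (Fin n),
      a₁ * ‖ξ‖ - a₂ ≤ f ξ ∧ f ξ ≤ a₃ * ‖ξ‖ + a₄)
    (c₁ c₂ μ κ : ℝ) (hc₁ : 0 < c₁) (hc₂ : 0 < c₂) (hμ : 1 < μ) (hκμ : κ ≤ μ)
    (hell : ∀ ξ η : EuclideanSpace ℝ (Fin n),
      c₁ * (1 + ‖ξ‖) ^ (-μ) * ‖η‖ ^ 2 ≤ fderiv ℝ (fun x => fderiv ℝ f x η) ξ η ∧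
      fderiv ℝ (fun x => fderiv ℝ f x η) ξ η ≤ c₂ * (1 + ‖ξ‖) ^ (-κ) * ‖η‖ ^ 2) :
    κ ≤ 1 := by
  by_contra hκ
  push_neg at hκ
  have hfd : Differentiable ℝ f := hf.differentiable (by norm_num)
  set F : EuclideanSpace ℝ (Fin n) → (EuclideanSpace ℝ (Fin n) →L[ℝ] ℝ) := fderiv ℝ f with hFdef
  have hF1 : ContDiff ℝ 1 F := hf.fderiv_right (by norm_num)
  have hFd : Differentiable ℝ F := hF1.differentiable (by norm_num)
  set B := fderiv ℝ F with hBdef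
  -- rewrite ellipticity in terms of B
  have hB : ∀ ξ η : EuclideanSpace ℝ (Fin n), c₁ * (1 + ‖ξ‖) ^ (-μ) * ‖η‖ ^ 2 ≤ B ξ η η ∧
      B ξ η η ≤ c₂ * (1 + ‖ξ‖) ^ (-κ) * ‖η‖ ^ 2 := by
    intro ξ η
    have h := hell ξ η
    have heq : fderiv ℝ (fun x => fderiv ℝ f x η) ξ = (B ξ).flip η := by
      have := fderiv_clm_apply (hFd ξ) (differentiableAt_const η)
      simpa using this
    rw [heq] at h
    simpa using h
  have hsymm : ∀ ξ : EuclideanSpace ℝ (Fin n), ∀ v w, B ξ v w = B ξ w v := by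
    intro ξ
    exact (hf.contDiffAt.isSymmSndFDerivAt (by norm_num))
  have hpos : ∀ ξ η : EuclideanSpace ℝ (Fin n), 0 ≤ B ξ η η := by
    intro ξ η
    refine le_trans ?_ (hB ξ η).1
    have : (0:ℝ) < 1 + ‖ξ‖ := by positivity
    positivity
  -- basis vectors
  set e1 : EuclideanSpace ℝ (Fin n) := EuclideanSpace.single (⟨0, by omega⟩ : Fin n) (1:ℝ) with he1def
  set e2 : EuclideanSpace ℝ (Fin n) := EuclideanSpace.single (⟨1, by omega⟩ : Fin n) (1:ℝ) with he2def
  have he1 : ‖e1‖ = 1 := by simp [he1def, EuclideanSpace.norm_single]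
  have he2 : ‖e2‖ = 1 := by simp [he2def, EuclideanSpace.norm_single]
  have hinner : inner ℝ e1 e2 = (0:ℝ) := by
    rw [he1def, he2def, EuclideanSpace.inner_single_left, EuclideanSpace.single_apply]
    simp [Fin.ext_iff]
  clear_value e1 e2
  have hcomb : ∀ a b : ℝ, ‖a • e1 + b • e2‖ ^ 2 = a ^ 2 + b ^ 2 := by
    intro a b
    rw [norm_add_sq_real, real_inner_smul_left, real_inner_smul_right, hinner,
      norm_smul, norm_smul, he1, he2]
    simp [sq_abs]
  -- derivative along rays
  have hray : ∀ (x : EuclideanSpace ℝ (Fin n)) (s : ℝ),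
      HasDerivAt (fun s : ℝ => f (s • x)) (F (s • x) x) s := by
    intro x s
    have h1 : HasDerivAt (fun s : ℝ => s • x) x s := by
      simpa using (hasDerivAt_id s).smul_const x
    exact ((hfd (s • x)).hasFDerivAt.comp_hasDerivAt s h1)
  have hFat : ∀ p ζ : EuclideanSpace ℝ (Fin n),
      HasFDerivAt (fun y => F y ζ) ((B p).flip ζ) p := by
    intro p ζ
    have := ((hFd p).hasFDerivAt.clm_apply (hasFDerivAt_const ζ p))
    simpa using this
  have hrayF : ∀ (x ζ : EuclideanSpace ℝ (Fin n)) (s : ℝ),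
      HasDerivAt (fun s : ℝ => F (s • x) ζ) (B (s • x) x ζ) s := by
    intro x ζ s
    have h1 : HasDerivAt (fun s : ℝ => s • x) x s := by
      simpa using (hasDerivAt_id s).smul_const x
    have := (hFat (s • x) ζ).comp_hasDerivAt s h1
    exact this
  clear_value F B
  -- convexity: directional derivative at x dominates the slope from 0
  have key1 : ∀ x : EuclideanSpace ℝ (Fin n), f x - f 0 ≤ F x x := by
    intro x
    have hφmono : Monotone (fun s : ℝ => F (s • x) x) := by
      apply monotone_of_deriv_nonneg
      · exact fun s => (hrayF x x s).differentiableAt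
      · intro s
        rw [(hrayF x x s).deriv]
        exact hpos _ _
    obtain ⟨c, hc, hceq⟩ := exists_hasDerivAt_eq_slope (fun s : ℝ => f (s • x))
      (fun s => F (s • x) x) one_pos
      (fun s _ => (hray x s).continuousAt.continuousWithinAt)
      (fun s _ => hray x s)
    have h01 : f x - f 0 = F (c • x) x := by
      have := hceq
      simp only [one_smul, zero_smul] at this
      rw [this]; ring
    rw [h01]
    have := hφmono (le_of_lt hc.2)
    simpa using this
  -- gradient variation along segments avoiding the origin
  have hvar : ∀ t : ℝ, 0 < t → ∀ P Q : EuclideanSpace ℝ (Fin n),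
      (∀ p ∈ segment ℝ P Q, t / 2 ≤ ‖p‖) → ‖Q - P‖ ≤ 2 * t →
      |F Q e1 - F P e1| ≤ c₂ * (1 + t / 2) ^ (-κ) * (2 * t) := by
    intro t ht P Q hsegnorm hPQ
    set M := c₂ * (1 + t / 2) ^ (-κ) with hMdef
    have hM0 : 0 ≤ M := by positivity
    have hbnd : ∀ p ∈ segment ℝ P Q, ‖(B p).flip e1‖ ≤ M := by
      intro p hp
      apply ContinuousLinearMap.opNorm_le_bound _ hM0
      intro η
      have hcs := bilin_cs (B p) (c₂ * (1 + ‖p‖) ^ (-κ)) (by positivity)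
        (hsymm p) (hpos p) (fun v => (hB p v).2) η e1
      have hmono : c₂ * (1 + ‖p‖) ^ (-κ) ≤ M := by
        rw [hMdef]
        have hb1 : (0:ℝ) < 1 + t / 2 := by positivity
        have hb2 : (0:ℝ) < 1 + ‖p‖ := by positivity
        have hle : (1 + t / 2 : ℝ) ^ κ ≤ (1 + ‖p‖) ^ κ :=
          Real.rpow_le_rpow (le_of_lt hb1) (by linarith [hsegnorm p hp]) (by linarith)
        rw [Real.rpow_neg (le_of_lt hb2), Real.rpow_neg (le_of_lt hb1)]
        have := inv_anti₀ (Real.rpow_pos_of_pos hb1 κ) hle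
        exact mul_le_mul_of_nonneg_left this (le_of_lt hc₂)
      calc ‖(B p).flip e1 η‖ = |B p η e1| := by simp [Real.norm_eq_abs]
        _ ≤ c₂ * (1 + ‖p‖) ^ (-κ) * ‖η‖ * ‖e1‖ := hcs
        _ = c₂ * (1 + ‖p‖) ^ (-κ) * ‖η‖ := by rw [he1, mul_one]
        _ ≤ M * ‖η‖ := mul_le_mul_of_nonneg_right hmono (norm_nonneg η)
    have hmvt := (convex_segment P Q).norm_image_sub_le_of_norm_hasFDerivWithin_le
      (fun p hp => (hFat p e1).hasFDerivWithinAt) hbnd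
      (left_mem_segment ℝ P Q) (right_mem_segment ℝ P Q)
    rw [Real.norm_eq_abs] at hmvt
    calc |F Q e1 - F P e1| ≤ M * ‖Q - P‖ := hmvt
      _ ≤ M * (2 * t) := mul_le_mul_of_nonneg_left hPQ hM0
  -- the master inequality for all t ≥ 1
  set K : ℝ := a₂ + f 0 with hKdef
  clear_value K
  have master : ∀ t : ℝ, 1 ≤ t →
      2 * a₁ ≤ 2 * K / t + 8 * c₂ * (t * (1 + t / 2) ^ (-κ)) := by
    intro t ht
    have ht0 : 0 < t := lt_of_lt_of_le one_pos ht
    have hnorm1 : ‖t • e1‖ = t := by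
      rw [norm_smul, he1, mul_one, Real.norm_eq_abs, abs_of_pos ht0]
    have hnorm1' : ‖(-t) • e1‖ = t := by
      rw [norm_smul, he1, mul_one, Real.norm_eq_abs, abs_neg, abs_of_pos ht0]
    set A : ℝ := F (t • e1) e1 with hA
    set A' : ℝ := F ((-t) • e1) e1 with hA'
    set G : ℝ := F (t • e2) e1 with hG
    clear_value A A' G
    have hlow1 : a₁ * t - K ≤ t * A := by
      have h1 := key1 (t • e1)
      have h2 := (hgrowth (t • e1)).1
      rw [hnorm1] at h2
      have h3 : F (t • e1) (t • e1) = t * A := by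
        rw [_root_.map_smul, smul_eq_mul, ← hA]
      rw [h3] at h1
      simp only [hKdef]
      linarith
    have hlow2 : a₁ * t - K ≤ -(t * A') := by
      have h1 := key1 ((-t) • e1)
      have h2 := (hgrowth ((-t) • e1)).1
      rw [hnorm1'] at h2
      have h3 : F ((-t) • e1) ((-t) • e1) = -(t * A') := by
        rw [_root_.map_smul, smul_eq_mul, ← hA']
        ring
      rw [h3] at h1
      simp only [hKdef]
      linarith
    have hseg1 : ∀ p ∈ segment ℝ (t • e1) (t • e2), t / 2 ≤ ‖p‖ := by
      rintro p ⟨u, v, hu, hv, huv, rfl⟩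
      have hnp : ‖u • (t • e1) + v • (t • e2)‖ ^ 2 = (u * t) ^ 2 + (v * t) ^ 2 := by
        rw [smul_smul, smul_smul]
        exact hcomb _ _
      exact half_le_of_sq t _ u v ht0 (norm_nonneg _) huv hnp
    have hseg2 : ∀ p ∈ segment ℝ (t • e2) ((-t) • e1), t / 2 ≤ ‖p‖ := by
      rintro p ⟨u, v, hu, hv, huv, rfl⟩
      have hrw : u • (t • e2) + v • ((-t) • e1) = (v * (-t)) • e1 + (u * t) • e2 := by
        rw [smul_smul, smul_smul]
        abel
      rw [hrw]
      have hnp : ‖(v * (-t)) • e1 + (u * t) • e2‖ ^ 2 = (v * t) ^ 2 + (u * t) ^ 2 := by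
        rw [hcomb (v * (-t)) (u * t)]
        ring
      exact half_le_of_sq t _ v u ht0 (norm_nonneg _) (by linarith) hnp
    have hdist1 : ‖t • e2 - t • e1‖ ≤ 2 * t := by
      have hrw : t • e2 - t • e1 = (-t) • e1 + t • e2 := by
        rw [neg_smul]; abel
      have hnp : ‖(-t) • e1 + t • e2‖ ^ 2 = t ^ 2 + t ^ 2 := by
        rw [hcomb (-t) t]; ring
      rw [hrw]
      exact le_two_mul_of_sq t _ ht0 (norm_nonneg _) hnp
    have hdist2 : ‖(-t) • e1 - t • e2‖ ≤ 2 * t := by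
      have hrw : (-t) • e1 - t • e2 = (-t) • e1 + (-t) • e2 := by
        rw [neg_smul, neg_smul]; abel
      have hnp : ‖(-t) • e1 + (-t) • e2‖ ^ 2 = t ^ 2 + t ^ 2 := by
        rw [hcomb (-t) (-t)]; ring
      rw [hrw]
      exact le_two_mul_of_sq t _ ht0 (norm_nonneg _) hnp
    have hd1 : |G - A| ≤ c₂ * (1 + t / 2) ^ (-κ) * (2 * t) := by
      rw [hG, hA]; exact hvar t ht0 (t • e1) (t • e2) hseg1 hdist1
    have hd2 : |A' - G| ≤ c₂ * (1 + t / 2) ^ (-κ) * (2 * t) := by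
      rw [hA', hG]; exact hvar t ht0 (t • e2) ((-t) • e1) hseg2 hdist2
    have hAA : A - A' ≤ 2 * (c₂ * (1 + t / 2) ^ (-κ) * (2 * t)) := by
      have h1 := abs_le.1 hd1
      have h2 := abs_le.1 hd2
      linarith [h1.1, h1.2, h2.1, h2.2]
    have hgoal : 2 * a₁ - 8 * c₂ * (t * (1 + t / 2) ^ (-κ)) ≤ 2 * K / t := by
      rw [le_div_iff₀ ht0]
      have hP0 : (0:ℝ) ≤ (1 + t / 2) ^ (-κ) := by positivity
      nlinarith [mul_le_mul_of_nonneg_left hAA ht0.le, mul_nonneg hP0 (sq_nonneg t),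
        mul_nonneg (mul_nonneg hc₂.le hP0) (sq_nonneg t)]
    linarith
  -- the right-hand side tends to zero, contradiction
  have T1 : Filter.Tendsto (fun t : ℝ => 2 * K / t) Filter.atTop (nhds 0) :=
    tendsto_const_nhds.div_atTop Filter.tendsto_id
  have T2 : Filter.Tendsto (fun t : ℝ => 8 * c₂ * (t * (1 + t / 2) ^ (-κ)))
      Filter.atTop (nhds 0) := by
    have hb : ∀ᶠ t : ℝ in Filter.atTop, t * (1 + t / 2) ^ (-κ) ≤ (2:ℝ) ^ κ * t ^ (-(κ - 1)) := by
      filter_upwards [Filter.eventually_ge_atTop (1:ℝ)] with t ht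
      have ht0 : (0:ℝ) < t := lt_of_lt_of_le one_pos ht
      have h1 : (1 + t / 2 : ℝ) ^ (-κ) ≤ (t / 2) ^ (-κ) := by
        rw [Real.rpow_neg (by positivity), Real.rpow_neg (by positivity)]
        exact inv_anti₀ (Real.rpow_pos_of_pos (by positivity) κ)
          (Real.rpow_le_rpow (by positivity) (by linarith) (by linarith))
      have e1' : (t / 2 : ℝ) ^ (-κ) = t ^ (-κ) * 2 ^ κ := by
        rw [Real.div_rpow ht0.le (by norm_num : (0:ℝ) ≤ 2),
          Real.rpow_neg (by norm_num : (0:ℝ) ≤ 2), div_eq_mul_inv, inv_inv]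
      have e2' : t * t ^ (-κ) = t ^ (-(κ - 1)) := by
        rw [show -(κ - 1) = 1 + -κ by ring, Real.rpow_add ht0, Real.rpow_one]
      calc t * (1 + t / 2) ^ (-κ) ≤ t * (t / 2) ^ (-κ) :=
            mul_le_mul_of_nonneg_left h1 ht0.le
        _ = (2:ℝ) ^ κ * t ^ (-(κ - 1)) := by rw [e1', ← mul_assoc, e2']; ring
    have hb0 : ∀ᶠ t : ℝ in Filter.atTop, 0 ≤ t * (1 + t / 2) ^ (-κ) := by
      filter_upwards [Filter.eventually_ge_atTop (0:ℝ)] with t ht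
      have : (0:ℝ) < 1 + t / 2 := by positivity
      positivity
    have hlim : Filter.Tendsto (fun t : ℝ => (2:ℝ) ^ κ * t ^ (-(κ - 1)))
        Filter.atTop (nhds 0) := by
      simpa using (tendsto_rpow_neg_atTop (by linarith : (0:ℝ) < κ - 1)).const_mul ((2:ℝ) ^ κ)
    have hsq := squeeze_zero' hb0 hb hlim
    simpa using hsq.const_mul (8 * c₂)
  have Tsum : Filter.Tendsto
      (fun t : ℝ => 2 * K / t + 8 * c₂ * (t * (1 + t / 2) ^ (-κ)))
      Filter.atTop (nhds 0) := by
    simpa using T1.add T2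
  have hev := Tsum.eventually_lt_const (by linarith : (0:ℝ) < 2 * a₁)
  obtain ⟨t, hlt, ht1⟩ := (hev.and (Filter.eventually_ge_atTop (1:ℝ))).exists
  linarith [master t ht1]
end

section
/- Let μ₁, μ₂ > 1 and define f : ℝ² → ℝ by f(ξ₁,ξ₂) = Φ_{μ₁}(|ξ₁|) + Φ_{μ₂}(|ξ₂|). Then f is of class C² and, with μ := max{μ₁, μ₂}, there exist constants c₁, c₂ > 0 such that for all ξ, η ∈ ℝ²: c₁(1+|ξ|)^{−μ}|η|² ≤ D²f(ξ)(η,η) ≤ c₂|η|². -/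
open Real MeasureTheory

/-- `Φ_μ(t) = (μ-1) ∫₀ᵗ ∫₀ˢ (1+r)^{-μ} dr ds`. -/
noncomputable def Phi (μ : ℝ) (t : ℝ) : ℝ :=
  (μ - 1) * ∫ s in (0:ℝ)..t, ∫ r in (0:ℝ)..s, (1 + r) ^ (-μ)

/-- The Hessian bilinear form `D²f(ξ)(η,η)` of `f` at `ξ` in direction `η`. -/
noncomputable def hessQ (f : EuclideanSpace ℝ (Fin 2) → ℝ)
    (ξ η : EuclideanSpace ℝ (Fin 2)) : ℝ :=
  fderiv ℝ (fun x => fderiv ℝ f x η) ξ η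


/-- even extension of the integrand -/
noncomputable def Gg (μ : ℝ) (s : ℝ) : ℝ := ∫ r in (0:ℝ)..s, (1 + |r|) ^ (-μ)

lemma contg (μ : ℝ) : Continuous (fun r : ℝ => (1 + |r|) ^ (-μ)) := by
  apply Continuous.rpow_const (by continuity)
  intro x; left; positivity

lemma Gg_hasDerivAt (μ x : ℝ) : HasDerivAt (Gg μ) ((1 + |x|) ^ (-μ)) x :=
  ((contg μ).integral_hasStrictDerivAt 0 x).hasDerivAt

lemma Gg_neg (μ x : ℝ) : Gg μ (-x) = - Gg μ x := by
  have h : (∫ s in (0:ℝ)..x, (1 + |(-s)|) ^ (-μ)) = ∫ s in (-x)..(-(0:ℝ)), (1 + |s|) ^ (-μ) :=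
    intervalIntegral.integral_comp_neg (fun s => (1 + |s|) ^ (-μ))
  simp only [abs_neg, neg_zero] at h
  unfold Gg
  rw [intervalIntegral.integral_symm (0:ℝ) (-x)] at h
  linarith

/-- even extension of `Phi ∘ abs` -/
noncomputable def Psi (μ : ℝ) (x : ℝ) : ℝ := (μ - 1) * ∫ s in (0:ℝ)..x, Gg μ s

lemma contGg (μ : ℝ) : Continuous (Gg μ) := by
  have : Differentiable ℝ (Gg μ) := fun x => (Gg_hasDerivAt μ x).differentiableAt
  exact this.continuous

lemma Psi_hasDerivAt (μ x : ℝ) :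
    HasDerivAt (Psi μ) ((μ - 1) * Gg μ x) x := by
  have h := ((contGg μ).integral_hasStrictDerivAt 0 x).hasDerivAt
  exact h.const_mul (μ - 1)

lemma Psi_deriv (μ : ℝ) : deriv (Psi μ) = fun x => (μ - 1) * Gg μ x :=
  funext fun x => (Psi_hasDerivAt μ x).deriv

lemma deriv2_hasDerivAt (μ x : ℝ) :
    HasDerivAt (fun t => (μ - 1) * Gg μ t) ((μ - 1) * (1 + |x|) ^ (-μ)) x :=
  (Gg_hasDerivAt μ x).const_mul (μ - 1)

lemma Psi_contDiff (μ : ℝ) : ContDiff ℝ 2 (Psi μ) := by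
  rw [show (2 : WithTop ℕ∞) = 1 + 1 from rfl, contDiff_succ_iff_deriv]
  refine ⟨fun x => (Psi_hasDerivAt μ x).differentiableAt, by simp, ?_⟩
  rw [Psi_deriv, contDiff_one_iff_deriv]
  refine ⟨fun x => (deriv2_hasDerivAt μ x).differentiableAt, ?_⟩
  have : deriv (fun t => (μ - 1) * Gg μ t) = fun x => (μ - 1) * (1 + |x|) ^ (-μ) :=
    funext fun x => (deriv2_hasDerivAt μ x).deriv
  rw [this]
  exact continuous_const.mul (contg μ)

lemma Phi_abs (μ x : ℝ) : Phi μ |x| = Psi μ x := by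
  have key : ∀ t : ℝ, 0 ≤ t → Phi μ t = (μ - 1) * ∫ s in (0:ℝ)..t, Gg μ s := by
    intro t ht
    unfold Phi Gg
    congr 1
    refine intervalIntegral.integral_congr fun s hs => ?_
    rw [Set.uIcc_of_le ht] at hs
    refine intervalIntegral.integral_congr fun r hr => ?_
    rw [Set.uIcc_of_le hs.1] at hr
    rw [abs_of_nonneg hr.1]
  rcases le_or_gt 0 x with hx | hx
  · rw [abs_of_nonneg hx]; exact key x hx
  · rw [abs_of_neg hx, key (-x) (by linarith)]
    unfold Psi
    congr 1
    have h : (∫ s in (0:ℝ)..x, Gg μ (-s)) = ∫ s in (-x)..(-(0:ℝ)), Gg μ s :=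
      intervalIntegral.integral_comp_neg (Gg μ)
    simp only [neg_zero, Gg_neg] at h
    rw [intervalIntegral.integral_symm (0:ℝ) (-x), intervalIntegral.integral_neg] at h
    linarith

noncomputable def FF (μ₁ μ₂ : ℝ) : EuclideanSpace ℝ (Fin 2) → ℝ :=
  fun ξ => Psi μ₁ (ξ 0) + Psi μ₂ (ξ 1)

lemma FF_hasFDerivAt (μ₁ μ₂ : ℝ) (x : EuclideanSpace ℝ (Fin 2)) :
    HasFDerivAt (FF μ₁ μ₂)
      (((μ₁ - 1) * Gg μ₁ (x 0)) • EuclideanSpace.proj (𝕜 := ℝ) (0 : Fin 2) +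
        ((μ₂ - 1) * Gg μ₂ (x 1)) • EuclideanSpace.proj (𝕜 := ℝ) (1 : Fin 2)) x := by
  have h0 : HasFDerivAt (Psi μ₁ ∘ (EuclideanSpace.proj (𝕜 := ℝ) (0 : Fin 2)))
      (((μ₁ - 1) * Gg μ₁ (x 0)) • EuclideanSpace.proj (𝕜 := ℝ) (0 : Fin 2)) x :=
    HasDerivAt.comp_hasFDerivAt (𝕜 := ℝ) x (Psi_hasDerivAt μ₁ (x 0))
      (EuclideanSpace.proj (𝕜 := ℝ) (0 : Fin 2)).hasFDerivAt
  have h1 : HasFDerivAt (Psi μ₂ ∘ (EuclideanSpace.proj (𝕜 := ℝ) (1 : Fin 2)))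
      (((μ₂ - 1) * Gg μ₂ (x 1)) • EuclideanSpace.proj (𝕜 := ℝ) (1 : Fin 2)) x :=
    HasDerivAt.comp_hasFDerivAt (𝕜 := ℝ) x (Psi_hasDerivAt μ₂ (x 1))
      (EuclideanSpace.proj (𝕜 := ℝ) (1 : Fin 2)).hasFDerivAt
  exact h0.add h1

lemma FF_fderiv_apply (μ₁ μ₂ : ℝ) (x η : EuclideanSpace ℝ (Fin 2)) :
    fderiv ℝ (FF μ₁ μ₂) x η
      = (μ₁ - 1) * Gg μ₁ (x 0) * η 0 + (μ₂ - 1) * Gg μ₂ (x 1) * η 1 := by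
  rw [(FF_hasFDerivAt μ₁ μ₂ x).fderiv]
  simp [PiLp.proj_apply, mul_comm]

lemma FF_hessQ (μ₁ μ₂ : ℝ) (ξ η : EuclideanSpace ℝ (Fin 2)) :
    hessQ (FF μ₁ μ₂) ξ η
      = (μ₁ - 1) * (1 + |ξ 0|) ^ (-μ₁) * (η 0) ^ 2
        + (μ₂ - 1) * (1 + |ξ 1|) ^ (-μ₂) * (η 1) ^ 2 := by
  unfold hessQ
  have hrw : (fun x : EuclideanSpace ℝ (Fin 2) => fderiv ℝ (FF μ₁ μ₂) x η)
      = fun x => (μ₁ - 1) * Gg μ₁ (x 0) * η 0 + (μ₂ - 1) * Gg μ₂ (x 1) * η 1 :=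
    funext fun x => FF_fderiv_apply μ₁ μ₂ x η
  rw [hrw]
  have h0 : HasFDerivAt (fun x : EuclideanSpace ℝ (Fin 2) => (μ₁ - 1) * Gg μ₁ (x 0) * η 0)
      (((μ₁ - 1) * (1 + |ξ 0|) ^ (-μ₁) * η 0) • EuclideanSpace.proj (𝕜 := ℝ) (0 : Fin 2)) ξ :=
    by
      have := HasDerivAt.comp_hasFDerivAt (𝕜 := ℝ) (f := ⇑(EuclideanSpace.proj (𝕜 := ℝ) (0 : Fin 2))) ξ
        ((deriv2_hasDerivAt μ₁ (ξ 0)).mul_const (η 0))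
        (EuclideanSpace.proj (𝕜 := ℝ) (0 : Fin 2)).hasFDerivAt
      exact this
  have h1 : HasFDerivAt (fun x : EuclideanSpace ℝ (Fin 2) => (μ₂ - 1) * Gg μ₂ (x 1) * η 1)
      (((μ₂ - 1) * (1 + |ξ 1|) ^ (-μ₂) * η 1) • EuclideanSpace.proj (𝕜 := ℝ) (1 : Fin 2)) ξ :=
    by
      have := HasDerivAt.comp_hasFDerivAt (𝕜 := ℝ) (f := ⇑(EuclideanSpace.proj (𝕜 := ℝ) (1 : Fin 2))) ξ
        ((deriv2_hasDerivAt μ₂ (ξ 1)).mul_const (η 1))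
        (EuclideanSpace.proj (𝕜 := ℝ) (1 : Fin 2)).hasFDerivAt
      exact this
  rw [(show HasFDerivAt (fun x : EuclideanSpace ℝ (Fin 2) => (μ₁ - 1) * Gg μ₁ (x 0) * η 0 + (μ₂ - 1) * Gg μ₂ (x 1) * η 1) _ ξ from h0.add h1).fderiv]
  simp [PiLp.proj_apply]
  ring

lemma rpow_lower (M μ' t R : ℝ) (hμ' : 1 < μ') (hμ'M : μ' ≤ M) (hR : 0 ≤ R) (ht : |t| ≤ R) :
    (1 + R) ^ (-M) ≤ (1 + |t|) ^ (-μ') := by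
  have h1 : (1 + R) ^ (-M) ≤ (1 + R) ^ (-μ') :=
    Real.rpow_le_rpow_of_exponent_le (by linarith) (by linarith)
  have h2 : (1 + R) ^ (-μ') ≤ (1 + |t|) ^ (-μ') :=
    Real.rpow_le_rpow_of_nonpos (by positivity) (by linarith) (by linarith)
  linarith

lemma rpow_upper (μ' t : ℝ) (hμ' : 1 < μ') : (1 + |t|) ^ (-μ') ≤ 1 :=
  Real.rpow_le_one_of_one_le_of_nonpos (by linarith [abs_nonneg t]) (by linarith)

/-- the splitting density `f(ξ₁,ξ₂) = Φ_{μ₁}(|ξ₁|) + Φ_{μ₂}(|ξ₂|)` is `C²` and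
satisfies `c₁(1+|ξ|)^{-μ}|η|² ≤ D²f(ξ)(η,η) ≤ c₂|η|²` with `μ = max{μ₁,μ₂}`. -/
theorem splitting_Phi_elliptic (μ₁ μ₂ : ℝ) (hμ₁ : 1 < μ₁) (hμ₂ : 1 < μ₂)
    (f : EuclideanSpace ℝ (Fin 2) → ℝ)
    (hf : f = fun ξ => Phi μ₁ |ξ 0| + Phi μ₂ |ξ 1|) :
    ContDiff ℝ 2 f ∧
    ∃ c₁ c₂ : ℝ, 0 < c₁ ∧ 0 < c₂ ∧
      ∀ ξ η : EuclideanSpace ℝ (Fin 2),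
        c₁ * (1 + ‖ξ‖) ^ (-(max μ₁ μ₂)) * ‖η‖ ^ 2 ≤ hessQ f ξ η ∧
        hessQ f ξ η ≤ c₂ * ‖η‖ ^ 2 := by
  have hf' : f = FF μ₁ μ₂ := by
    rw [hf]; funext ξ; simp only [FF, Phi_abs]
  subst hf'
  constructor
  · exact ((Psi_contDiff μ₁).comp
        (EuclideanSpace.proj (𝕜 := ℝ) (0 : Fin 2)).contDiff).add
      ((Psi_contDiff μ₂).comp (EuclideanSpace.proj (𝕜 := ℝ) (1 : Fin 2)).contDiff)
  · refine ⟨min μ₁ μ₂ - 1, max μ₁ μ₂ - 1, by simp [lt_min_iff]; constructor <;> linarith,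
      by have := le_max_left μ₁ μ₂; linarith, fun ξ η => ?_⟩
    set c₁ := min μ₁ μ₂ - 1 with hc₁
    set c₂ := max μ₁ μ₂ - 1 with hc₂
    rw [FF_hessQ]
    have hnormη : ‖η‖ ^ 2 = (η 0) ^ 2 + (η 1) ^ 2 := by
      have := PiLp.norm_sq_eq_of_L2 (fun _ : Fin 2 => ℝ) η
      simpa [Fin.sum_univ_two, Real.norm_eq_abs, sq_abs] using this
    have hnormξ : ‖ξ‖ ^ 2 = (ξ 0) ^ 2 + (ξ 1) ^ 2 := by
      have := PiLp.norm_sq_eq_of_L2 (fun _ : Fin 2 => ℝ) ξ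
      simpa [Fin.sum_univ_two, Real.norm_eq_abs, sq_abs] using this
    have habs0 : |ξ 0| ≤ ‖ξ‖ := by
      nlinarith [sq_abs (ξ 0), sq_nonneg (ξ 1), norm_nonneg ξ, abs_nonneg (ξ 0)]
    have habs1 : |ξ 1| ≤ ‖ξ‖ := by
      nlinarith [sq_abs (ξ 1), sq_nonneg (ξ 0), norm_nonneg ξ, abs_nonneg (ξ 1)]
    have hA0 : (1 + ‖ξ‖) ^ (-(max μ₁ μ₂)) ≤ (1 + |ξ 0|) ^ (-μ₁) :=
      rpow_lower _ _ _ _ hμ₁ (le_max_left _ _) (norm_nonneg ξ) habs0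
    have hA1 : (1 + ‖ξ‖) ^ (-(max μ₁ μ₂)) ≤ (1 + |ξ 1|) ^ (-μ₂) :=
      rpow_lower _ _ _ _ hμ₂ (le_max_right _ _) (norm_nonneg ξ) habs1
    have hApos : (0:ℝ) < (1 + ‖ξ‖) ^ (-(max μ₁ μ₂)) := by
      have : (0:ℝ) < 1 + ‖ξ‖ := by linarith [norm_nonneg ξ]
      positivity
    have hB0 : (1 + |ξ 0|) ^ (-μ₁) ≤ 1 := rpow_upper _ _ hμ₁
    have hB1 : (1 + |ξ 1|) ^ (-μ₂) ≤ 1 := rpow_upper _ _ hμ₂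
    have hc₁μ₁ : c₁ ≤ μ₁ - 1 := by have := min_le_left μ₁ μ₂; rw [hc₁]; linarith
    have hc₁μ₂ : c₁ ≤ μ₂ - 1 := by have := min_le_right μ₁ μ₂; rw [hc₁]; linarith
    have hμ₁c₂ : μ₁ - 1 ≤ c₂ := by have := le_max_left μ₁ μ₂; rw [hc₂]; linarith
    have hμ₂c₂ : μ₂ - 1 ≤ c₂ := by have := le_max_right μ₁ μ₂; rw [hc₂]; linarith
    constructor
    · have t0 : c₁ * (1 + ‖ξ‖) ^ (-(max μ₁ μ₂)) * (η 0) ^ 2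
          ≤ (μ₁ - 1) * (1 + |ξ 0|) ^ (-μ₁) * (η 0) ^ 2 :=
        mul_le_mul_of_nonneg_right
          (mul_le_mul hc₁μ₁ hA0 hApos.le (by linarith)) (sq_nonneg _)
      have t1 : c₁ * (1 + ‖ξ‖) ^ (-(max μ₁ μ₂)) * (η 1) ^ 2
          ≤ (μ₂ - 1) * (1 + |ξ 1|) ^ (-μ₂) * (η 1) ^ 2 :=
        mul_le_mul_of_nonneg_right
          (mul_le_mul hc₁μ₂ hA1 hApos.le (by linarith)) (sq_nonneg _)
      calc c₁ * (1 + ‖ξ‖) ^ (-(max μ₁ μ₂)) * ‖η‖ ^ 2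
          = c₁ * (1 + ‖ξ‖) ^ (-(max μ₁ μ₂)) * (η 0) ^ 2
            + c₁ * (1 + ‖ξ‖) ^ (-(max μ₁ μ₂)) * (η 1) ^ 2 := by rw [hnormη]; ring
        _ ≤ _ := add_le_add t0 t1
    · have s0 : (μ₁ - 1) * (1 + |ξ 0|) ^ (-μ₁) * (η 0) ^ 2 ≤ c₂ * (η 0) ^ 2 := by
        refine mul_le_mul_of_nonneg_right ?_ (sq_nonneg _)
        calc (μ₁ - 1) * (1 + |ξ 0|) ^ (-μ₁) ≤ (μ₁ - 1) * 1 :=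
              mul_le_mul_of_nonneg_left hB0 (by linarith)
          _ = μ₁ - 1 := mul_one _
          _ ≤ c₂ := hμ₁c₂
      have s1 : (μ₂ - 1) * (1 + |ξ 1|) ^ (-μ₂) * (η 1) ^ 2 ≤ c₂ * (η 1) ^ 2 := by
        refine mul_le_mul_of_nonneg_right ?_ (sq_nonneg _)
        calc (μ₂ - 1) * (1 + |ξ 1|) ^ (-μ₂) ≤ (μ₂ - 1) * 1 :=
              mul_le_mul_of_nonneg_left hB1 (by linarith)
          _ = μ₂ - 1 := mul_one _
          _ ≤ c₂ := hμ₂c₂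
      calc (μ₁ - 1) * (1 + |ξ 0|) ^ (-μ₁) * (η 0) ^ 2
            + (μ₂ - 1) * (1 + |ξ 1|) ^ (-μ₂) * (η 1) ^ 2
          ≤ c₂ * (η 0) ^ 2 + c₂ * (η 1) ^ 2 := add_le_add s0 s1
        _ = c₂ * ‖η‖ ^ 2 := by rw [hnormη]; ring
end

section
/- Let μ₁, μ₂ > 1 and define f : ℝ² → ℝ by f(ξ₁,ξ₂) = Φ_{μ₁}(|ξ₁|) + Φ_{μ₂}(|ξ₂|). Then the upper bound in the ellipticity estimate cannot be improved to any decaying power: for every κ > 0 and every constant c₂ > 0, there exist ξ, η ∈ ℝ² with η ≠ 0 such that D²f(ξ)(η,η) > c₂(1+|ξ|)^{−κ}|η|². -/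
open Real MeasureTheory

lemma contAt_aux (μ : ℝ) {t : ℝ} (ht : -1 < t) :
    ContinuousAt (fun r : ℝ => (1 + r) ^ (-μ)) t :=
  (Real.continuousAt_rpow_const (1 + t) (-μ) (Or.inl (by linarith : (0:ℝ) < 1 + t).ne')).comp
    ((continuous_const.add continuous_id).continuousAt)

lemma integrable_aux (μ : ℝ) {a b : ℝ} (ha : -1 < a) (hb : -1 < b) :
    IntervalIntegrable (fun r : ℝ => (1 + r) ^ (-μ)) volume a b := by
  apply ContinuousOn.intervalIntegrable
  intro r hr
  have h0 : -1 < r := by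
    have : min a b ≤ r := hr.1
    have := lt_min ha hb
    linarith
  exact (contAt_aux μ h0).continuousWithinAt

lemma g_hasDerivAt (μ : ℝ) {t : ℝ} (ht : -1 < t) :
    HasDerivAt (fun u : ℝ => ∫ r in (0:ℝ)..u, (1 + r) ^ (-μ)) ((1 + t) ^ (-μ)) t :=
  intervalIntegral.integral_hasDerivAt_right (integrable_aux μ (by norm_num) ht)
    (ContinuousAt.stronglyMeasurableAtFilter (isOpen_Ioi (a := (-1:ℝ)))
      (fun x hx => contAt_aux μ hx) t ht)
    (contAt_aux μ ht)

lemma phi_hasDerivAt (μ : ℝ) {t : ℝ} (ht : -1 < t) :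
    HasDerivAt (Phi μ) ((μ - 1) * ∫ r in (0:ℝ)..t, (1 + r) ^ (-μ)) t := by
  have hint : IntervalIntegrable (fun u : ℝ => ∫ r in (0:ℝ)..u, (1 + r) ^ (-μ)) volume 0 t := by
    apply ContinuousOn.intervalIntegrable
    intro x hx
    have hx1 : -1 < x := by
      have : min 0 t ≤ x := hx.1
      have := lt_min (by norm_num : (-1:ℝ) < 0) ht
      linarith
    exact (g_hasDerivAt μ hx1).continuousAt.continuousWithinAt
  have h := intervalIntegral.integral_hasDerivAt_right hint
    (ContinuousAt.stronglyMeasurableAtFilter (isOpen_Ioi (a := (-1:ℝ)))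
      (fun x hx => (g_hasDerivAt μ hx).continuousAt) t ht)
    (g_hasDerivAt μ ht).continuousAt
  exact h.const_mul (μ - 1)

lemma proj_hasFDerivAt (i : Fin 2) (x : EuclideanSpace ℝ (Fin 2)) :
    HasFDerivAt (𝕜 := ℝ) (fun y : EuclideanSpace ℝ (Fin 2) => y i) (EuclideanSpace.proj i) x :=
  ((EuclideanSpace.proj (𝕜 := ℝ) i).hasFDerivAt (x := x)).congr_of_eventuallyEq
    (Filter.Eventually.of_forall fun y => rfl)

set_option maxHeartbeats 1000000

/-- for the splitting density `f(ξ₁,ξ₂) = Φ_{μ₁}(|ξ₁|) + Φ_{μ₂}(|ξ₂|)`, the upper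
ellipticity bound cannot be improved to any decaying power: for every `κ > 0`, `c₂ > 0` there
are `ξ, η` with `η ≠ 0` and `D²f(ξ)(η,η) > c₂(1+|ξ|)^{-κ}|η|²`. -/
theorem splitting_Phi_upper_bound_sharp (μ₁ μ₂ : ℝ) (hμ₁ : 1 < μ₁) (hμ₂ : 1 < μ₂)
    (f : EuclideanSpace ℝ (Fin 2) → ℝ)
    (hf : f = fun ξ => Phi μ₁ |ξ 0| + Phi μ₂ |ξ 1|)
    (κ : ℝ) (hκ : 0 < κ) (c₂ : ℝ) (hc₂ : 0 < c₂) :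
    ∃ ξ η : EuclideanSpace ℝ (Fin 2), η ≠ 0 ∧
      c₂ * (1 + ‖ξ‖) ^ (-κ) * ‖η‖ ^ 2 < hessQ f ξ η := by
  set ε : ℝ := (μ₂ - 1) * (2:ℝ) ^ (-μ₂) with hεdef
  have hε : 0 < ε := mul_pos (by linarith) (Real.rpow_pos_of_pos (by norm_num) _)
  set T : ℝ := max 1 ((c₂ / ε) ^ (κ⁻¹)) with hTdef
  have hT1 : (1:ℝ) ≤ T := le_max_left _ _
  have hT0 : (0:ℝ) < T := lt_of_lt_of_le one_pos hT1
  set ξ : EuclideanSpace ℝ (Fin 2) := (WithLp.equiv 2 (Fin 2 → ℝ)).symm ![T, 1] with hξdef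
  set η : EuclideanSpace ℝ (Fin 2) := EuclideanSpace.single 1 (1:ℝ) with hηdef
  have hξ0 : ξ 0 = T := rfl
  have hξ1 : ξ 1 = 1 := rfl
  have hη0 : η 0 = 0 := by simp [hηdef, EuclideanSpace.single_apply]
  have hη1 : η 1 = 1 := by simp [hηdef, EuclideanSpace.single_apply]
  have hηne : η ≠ 0 := by
    intro h
    have : η 1 = 0 := by rw [h]; rfl
    rw [hη1] at this; norm_num at this
  have hηnorm : ‖η‖ = 1 := by rw [hηdef, EuclideanSpace.norm_single]; norm_num
  -- the open set where both coordinates are positive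
  set U : Set (EuclideanSpace ℝ (Fin 2)) := {y | 0 < y 0 ∧ 0 < y 1} with hUdef
  have hU : IsOpen U := by
    have h1 : IsOpen {y : EuclideanSpace ℝ (Fin 2) | 0 < y 0} :=
      isOpen_lt continuous_const (EuclideanSpace.proj (0 : Fin 2)).continuous
    have h2 : IsOpen {y : EuclideanSpace ℝ (Fin 2) | 0 < y 1} :=
      isOpen_lt continuous_const (EuclideanSpace.proj (1 : Fin 2)).continuous
    exact h1.inter h2
  have hξU : ξ ∈ U := ⟨by rw [hξ0]; exact hT0, by rw [hξ1]; norm_num⟩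
  set c : ℝ → ℝ := fun u => (μ₂ - 1) * ∫ r in (0:ℝ)..u, (1 + r) ^ (-μ₂) with hcdef
  have hstep : ∀ x ∈ U, fderiv ℝ f x η = c (x 1) := by
    intro x hx
    have hx0 : -1 < x 0 := lt_trans (by norm_num) hx.1
    have hx1 : -1 < x 1 := lt_trans (by norm_num) hx.2
    have hF1 : HasFDerivAt (fun y : EuclideanSpace ℝ (Fin 2) => Phi μ₁ (y 0))
        (((μ₁ - 1) * ∫ r in (0:ℝ)..(x 0), (1 + r) ^ (-μ₁)) • (EuclideanSpace.proj (𝕜 := ℝ) (0 : Fin 2))) x :=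
      by have h := (phi_hasDerivAt μ₁ hx0).comp_hasFDerivAt x (proj_hasFDerivAt 0 x); exact h
    have hF2 : HasFDerivAt (fun y : EuclideanSpace ℝ (Fin 2) => Phi μ₂ (y 1))
        ((c (x 1)) • (EuclideanSpace.proj (𝕜 := ℝ) (1 : Fin 2))) x :=
      by have h := (phi_hasDerivAt μ₂ hx1).comp_hasFDerivAt x (proj_hasFDerivAt 1 x); exact h
    have hF : HasFDerivAt (fun y : EuclideanSpace ℝ (Fin 2) => Phi μ₁ (y 0) + Phi μ₂ (y 1))
        (((μ₁ - 1) * ∫ r in (0:ℝ)..(x 0), (1 + r) ^ (-μ₁)) • (EuclideanSpace.proj (𝕜 := ℝ) (0 : Fin 2))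
          + (c (x 1)) • (EuclideanSpace.proj (𝕜 := ℝ) (1 : Fin 2))) x := hF1.add hF2
    have heq : f =ᶠ[nhds x] (fun y : EuclideanSpace ℝ (Fin 2) => Phi μ₁ (y 0) + Phi μ₂ (y 1)) := by
      filter_upwards [hU.mem_nhds hx] with y hy
      rw [hf]
      simp only [abs_of_pos hy.1, abs_of_pos hy.2]
    have hfd : HasFDerivAt f
        (((μ₁ - 1) * ∫ r in (0:ℝ)..(x 0), (1 + r) ^ (-μ₁)) • (EuclideanSpace.proj (𝕜 := ℝ) (0 : Fin 2))
          + (c (x 1)) • (EuclideanSpace.proj (𝕜 := ℝ) (1 : Fin 2))) x := hF.congr_of_eventuallyEq heq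
    rw [hfd.fderiv]
    simp [hη0, hη1]
  have hev : (fun x => fderiv ℝ f x η) =ᶠ[nhds ξ] (fun x => c (x 1)) := by
    filter_upwards [hU.mem_nhds hξU] with x hx using hstep x hx
  have hc1 : HasDerivAt c ((μ₂ - 1) * (1 + 1) ^ (-μ₂)) (ξ 1) := by
    rw [hξ1]
    exact ((g_hasDerivAt μ₂ (by norm_num : (-1:ℝ) < 1)).const_mul (μ₂ - 1))
  have h2 : HasFDerivAt (fun x : EuclideanSpace ℝ (Fin 2) => c (x 1))
      (((μ₂ - 1) * (1 + 1) ^ (-μ₂)) • (EuclideanSpace.proj (𝕜 := ℝ) (1 : Fin 2))) ξ :=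
    by have h := hc1.comp_hasFDerivAt ξ (proj_hasFDerivAt 1 ξ); exact h
  have hhess : hessQ f ξ η = ε := by
    rw [hessQ, hev.fderiv_eq, h2.fderiv]
    simp [hη1, hεdef]
    norm_num
  refine ⟨ξ, η, hηne, ?_⟩
  rw [hhess, hηnorm]
  have hTξ : T ≤ ‖ξ‖ := by
    rw [EuclideanSpace.norm_eq]
    have : T = Real.sqrt (T ^ 2) := (Real.sqrt_sq hT0.le).symm
    rw [this]
    apply Real.sqrt_le_sqrt
    rw [Fin.sum_univ_two, hξ0, hξ1]
    have : ‖T‖ ^ 2 = T ^ 2 := by rw [Real.norm_eq_abs, sq_abs]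
    rw [this]
    simp
  have hmono : (1 + ‖ξ‖) ^ (-κ) ≤ (1 + T) ^ (-κ) :=
    Real.rpow_le_rpow_of_nonpos (by linarith) (by linarith) (by linarith)
  have hlast : c₂ * (1 + T) ^ (-κ) < ε := by
    have hX : c₂ / ε < (1 + T) ^ κ := by
      have hbase : (c₂ / ε) ^ (κ⁻¹) < 1 + T :=
        lt_of_le_of_lt (le_max_right _ _) (lt_one_add T)
      have h0 : (0:ℝ) ≤ (c₂ / ε) ^ (κ⁻¹) := Real.rpow_nonneg (by positivity) _
      have := Real.rpow_lt_rpow h0 hbase hκ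
      rwa [← Real.rpow_mul (by positivity : (0:ℝ) ≤ c₂ / ε), inv_mul_cancel₀ hκ.ne',
        Real.rpow_one] at this
    have hXpos : 0 < (1 + T) ^ κ := Real.rpow_pos_of_pos (by linarith) _
    rw [Real.rpow_neg (by linarith : (0:ℝ) ≤ 1 + T), mul_inv_lt_iff₀ hXpos]
    calc c₂ = (c₂ / ε) * ε := by field_simp
    _ < (1 + T) ^ κ * ε := by exact mul_lt_mul_of_pos_right hX hε
    _ = ε * (1 + T) ^ κ := mul_comm _ _
  calc c₂ * (1 + ‖ξ‖) ^ (-κ) * 1 ^ 2 = c₂ * (1 + ‖ξ‖) ^ (-κ) := by ring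
  _ ≤ c₂ * (1 + T) ^ (-κ) := mul_le_mul_of_nonneg_left hmono hc₂.le
  _ < ε := hlast
end

section
/- (Caccioppoli-type inequality.) In the splitting setting described below, for every integer l ≥ 1 and every α ≥ 0 there exists a constant c = c(α, l) > 0, independent of δ, u, and η, such that for every η ∈ C_c^∞(Ω) with 0 ≤ η ≤ 1: ∫_Ω D²f_δ(∇u)(∇∂₁u, ∇∂₁u) η^{2l} Γ₁^{α} dx ≤ c ∫_Ω D²f_δ(∇u)(∇η, ∇η) η^{2l−2} Γ₁^{α+1} dx. -/
open Real MeasureTheory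

/-- Partial derivative of `v : ℝ² → ℝ` in the `i`-th coordinate direction. -/
noncomputable def pd (i : Fin 2) (v : EuclideanSpace ℝ (Fin 2) → ℝ)
    (x : EuclideanSpace ℝ (Fin 2)) : ℝ :=
  fderiv ℝ v x (EuclideanSpace.single i 1)

namespace CacAux

abbrev E2 := EuclideanSpace ℝ (Fin 2)

lemma pd_contDiff {f : E2 → ℝ} (hf : ContDiff ℝ (⊤:ℕ∞) f) (i : Fin 2) :
    ContDiff ℝ (⊤:ℕ∞) (pd i f) :=
  (ContinuousLinearMap.apply ℝ ℝ (EuclideanSpace.single i (1:ℝ))).contDiff.comp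
    (hf.fderiv_right (m := (⊤:ℕ∞)) (by decide))

lemma pd_symm {f : E2 → ℝ} (hf : ContDiff ℝ (⊤:ℕ∞) f) (i j : Fin 2) (x : E2) :
    pd i (pd j f) x = pd j (pd i f) x := by
  have hs : IsSymmSndFDerivAt ℝ f x := (hf.contDiffAt).isSymmSndFDerivAt (by rw [minSmoothness_of_isRCLikeNormedField]; decide)
  have key : ∀ (k m : Fin 2), pd k (pd m f) x
      = fderiv ℝ (fderiv ℝ f) x (EuclideanSpace.single k 1) (EuclideanSpace.single m 1) := by
    intro k m
    have hdiff : DifferentiableAt ℝ (fderiv ℝ f) x :=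
      ((hf.fderiv_right (m := (⊤:ℕ∞)) (by decide)).differentiable (by decide)).differentiableAt
    have : pd m f = fun y => (fderiv ℝ f y) (EuclideanSpace.single m 1) := rfl
    rw [pd, this, fderiv_clm_apply hdiff (differentiableAt_const _)]
    simp
  rw [key, key, hs]

lemma pd_zero {f : E2 → ℝ} {x : E2} (h : x ∉ tsupport f) (i : Fin 2) : pd i f x = 0 := by
  have : fderiv ℝ f x = 0 := by
    by_contra h'
    exact h (support_fderiv_subset ℝ (Function.mem_support.mpr h'))
  simp [pd, this]

lemma tsupport_pd_subset (f : E2 → ℝ) (i : Fin 2) : tsupport (pd i f) ⊆ tsupport f := by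
  apply closure_minimal _ (isClosed_tsupport f)
  intro x hx
  by_contra hxn
  exact (Function.mem_support.mp hx) (pd_zero hxn i)

lemma integrable_aux {f : E2 → ℝ} (hf : Continuous f) {K : Set E2} (hK : IsCompact K)
    (h0 : ∀ x ∉ K, f x = 0) : Integrable f :=
  hf.integrable_of_hasCompactSupport (HasCompactSupport.intro hK h0)

lemma d2_facts {f : ℝ → ℝ} (hf : ContDiff ℝ 2 f) :
    Differentiable ℝ (deriv f) ∧ Continuous (deriv (deriv f)) := by
  have h2 : ContDiff ℝ ((1:WithTop ℕ∞)+1) f := by norm_num; exact_mod_cast hf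
  rcases contDiff_succ_iff_deriv.mp h2 with ⟨-, -, h1⟩
  have h1' : ContDiff ℝ ((0:WithTop ℕ∞)+1) (deriv f) := by norm_num; exact_mod_cast h1
  rcases contDiff_succ_iff_deriv.mp h1' with ⟨hd, -, h0⟩
  exact ⟨hd, h0.continuous⟩

lemma young1 (lR b s t p q g Γ w : ℝ) (hb : 0 ≤ b) (hg : 0 ≤ g) (hw : w^2 ≤ Γ) :
    |2*lR * (p*q) * g * w * (b*s*t)| ≤ (1/2)*(b*s^2)*p^2*g + (2*lR^2)*((b*t^2)*q^2*(g*Γ)) := by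
  rw [abs_le]
  constructor <;>
  nlinarith [mul_nonneg (mul_nonneg hb hg) (sq_nonneg (s*p - 2*lR*(t*q*w))),
    mul_nonneg (mul_nonneg hb hg) (sq_nonneg (s*p + 2*lR*(t*q*w))),
    mul_nonneg (mul_nonneg (mul_nonneg hb hg) (sq_nonneg (t*q)))
      (mul_nonneg (sq_nonneg lR) (sub_nonneg.mpr hw))]

end CacAux

set_option maxHeartbeats 2000000 in
open CacAux in
/-- Caccioppoli-type inequality in the splitting setting:
`∫_Ω D²f_δ(∇u)(∇∂₁u,∇∂₁u) η^{2l} Γ₁^α ≤ c ∫_Ω D²f_δ(∇u)(∇η,∇η) η^{2l-2} Γ₁^{α+1}`,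
with `c = c(α,l)` independent of `δ`, `u`, `η`. -/
theorem caccioppoli_splitting
    (Ω : Set (EuclideanSpace ℝ (Fin 2))) (hΩo : IsOpen Ω) (hΩb : Bornology.IsBounded Ω)
    (f₁ f₂ : ℝ → ℝ) (hf₁ : ContDiff ℝ 2 f₁) (hf₂ : ContDiff ℝ 2 f₂)
    (c₁ c₂ cb₁ cb₂ μ₁ μ₂ : ℝ)
    (hc₁ : 0 < c₁) (hc₂ : 0 < c₂) (hcb₁ : 0 < cb₁) (hcb₂ : 0 < cb₂)
    (hμ₁ : 1 < μ₁) (hμ₂ : 1 < μ₂)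
    (hell₁ : ∀ t : ℝ, c₁ * (1 + |t|) ^ (-μ₁) ≤ deriv (deriv f₁) t ∧ deriv (deriv f₁) t ≤ cb₁)
    (hell₂ : ∀ t : ℝ, c₂ * (1 + |t|) ^ (-μ₂) ≤ deriv (deriv f₂) t ∧ deriv (deriv f₂) t ≤ cb₂)
    (l : ℕ) (hl : 1 ≤ l) (α : ℝ) (hα : 0 ≤ α) :
    ∃ c : ℝ, 0 < c ∧
      ∀ (δ : ℝ), 0 < δ → δ ≤ 1 →
      ∀ (u : EuclideanSpace ℝ (Fin 2) → ℝ), ContDiff ℝ (⊤ : ℕ∞) u →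
      (∀ x ∈ Ω, δ * (pd 0 (pd 0 u) x + pd 1 (pd 1 u) x)
          + deriv (deriv f₁) (pd 0 u x) * pd 0 (pd 0 u) x
          + deriv (deriv f₂) (pd 1 u x) * pd 1 (pd 1 u) x = 0) →
      ∀ (η : EuclideanSpace ℝ (Fin 2) → ℝ), ContDiff ℝ (⊤ : ℕ∞) η →
        HasCompactSupport η → tsupport η ⊆ Ω →
        (∀ x, 0 ≤ η x) → (∀ x, η x ≤ 1) →
      (∫ x in Ω,
          (δ * ((pd 0 (pd 0 u) x) ^ 2 + (pd 1 (pd 0 u) x) ^ 2)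
            + deriv (deriv f₁) (pd 0 u x) * (pd 0 (pd 0 u) x) ^ 2
            + deriv (deriv f₂) (pd 1 u x) * (pd 1 (pd 0 u) x) ^ 2)
          * η x ^ (2 * l) * (1 + (pd 0 u x) ^ 2) ^ α)
      ≤ c * ∫ x in Ω,
          (δ * ((pd 0 η x) ^ 2 + (pd 1 η x) ^ 2)
            + deriv (deriv f₁) (pd 0 u x) * (pd 0 η x) ^ 2
            + deriv (deriv f₂) (pd 1 u x) * (pd 1 η x) ^ 2)
          * η x ^ (2 * l - 2) * (1 + (pd 0 u x) ^ 2) ^ (α + 1) := by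
  refine ⟨4 * (l:ℝ)^2, by positivity, ?_⟩
  intro δ hδ hδ1 u hu hEuler η hη hηc hηs hη0 hη1
  obtain ⟨hdf₁, hd2f₁c⟩ := d2_facts hf₁
  obtain ⟨hdf₂, hd2f₂c⟩ := d2_facts hf₂
  have h2f₁0 : ∀ t, 0 ≤ deriv (deriv f₁) t := by
    intro t
    have h := (hell₁ t).1
    have h' : (0:ℝ) < (1+|t|) ^ (-μ₁) := Real.rpow_pos_of_pos (by positivity) _
    nlinarith
  have h2f₂0 : ∀ t, 0 ≤ deriv (deriv f₂) t := by
    intro t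
    have h := (hell₂ t).1
    have h' : (0:ℝ) < (1+|t|) ^ (-μ₂) := Real.rpow_pos_of_pos (by positivity) _
    nlinarith
  set w := pd 0 u with hwdef
  set v := pd 1 u with hvdef
  have hw : ContDiff ℝ (⊤:ℕ∞) w := pd_contDiff hu 0
  have hv : ContDiff ℝ (⊤:ℕ∞) v := pd_contDiff hu 1
  have hwd : Differentiable ℝ w := hw.differentiable (by decide)
  have hvd : Differentiable ℝ v := hv.differentiable (by decide)
  set b1 : E2 → ℝ := fun x => δ + deriv (deriv f₁) (w x) with hb1def
  set b2 : E2 → ℝ := fun x => δ + deriv (deriv f₂) (v x) with hb2def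
  have hb1c : Continuous b1 := continuous_const.add (hd2f₁c.comp hw.continuous)
  have hb2c : Continuous b2 := continuous_const.add (hd2f₂c.comp hv.continuous)
  have hb10 : ∀ x, 0 ≤ b1 x := fun x => add_nonneg hδ.le (h2f₁0 _)
  have hb20 : ∀ x, 0 ≤ b2 x := fun x => add_nonneg hδ.le (h2f₂0 _)
  have hΓpos : ∀ x : E2, (0:ℝ) < 1 + w x ^ 2 := fun x => by positivity
  have hgc : ∀ β : ℝ, Continuous (fun x : E2 => (1 + w x ^ 2) ^ β) := fun β =>
    (continuous_const.add (hw.continuous.pow 2)).rpow_const (fun x => Or.inl (hΓpos x).ne')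
  -- the test function
  set φ : E2 → ℝ := fun y => η y ^ (2*l) * ((1 + w y ^ 2) ^ α * w y) with hφdef
  have hφ : ContDiff ℝ (⊤:ℕ∞) φ :=
    (hη.pow _).mul
      (((contDiff_const.add (hw.pow 2)).rpow_const_of_ne (fun x => (hΓpos x).ne')).mul hw)
  have hφts : tsupport φ ⊆ tsupport η := by
    apply closure_minimal _ (isClosed_tsupport η)
    intro x hx
    by_contra hxn
    apply Function.mem_support.mp hx
    have hη0' : η x = 0 := image_eq_zero_of_notMem_tsupport hxn
    simp only [hφdef]
    rw [hη0', zero_pow (by omega : 2*l ≠ 0), zero_mul]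
  have hφΩ : tsupport φ ⊆ Ω := hφts.trans hηs
  have hdφK : ∀ (i : Fin 2), ∀ x ∉ tsupport η, pd i φ x = 0 :=
    fun i x hx => pd_zero (fun h => hx (hφts h)) i
  have hψK : ∀ (i j : Fin 2), ∀ x ∉ tsupport η, pd i (pd j φ) x = 0 :=
    fun i j x hx => pd_zero (fun h => hx (hφts (tsupport_pd_subset φ j h))) i
  have hdηK : ∀ (i : Fin 2), ∀ x ∉ tsupport η, pd i η x = 0 := fun i x hx => pd_zero hx i
  have hηK : ∀ x ∉ tsupport η, η x = 0 := fun x hx => image_eq_zero_of_notMem_tsupport hx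
  have hφi : ∀ i : Fin 2, ContDiff ℝ (⊤:ℕ∞) (pd i φ) := fun i => pd_contDiff hφ i
  -- derivative formula for φ
  have hdφ : ∀ (i : Fin 2) (x : E2), pd i φ x =
      (η x ^ (2*l) * ((1 + w x ^ 2) ^ α + 2*α*(1 + w x ^ 2) ^ (α-1) * w x ^ 2)) * pd i w x
      + (2*(l:ℝ) * η x ^ (2*l-1) * (1 + w x ^ 2) ^ α * w x) * pd i η x := by
    intro i x
    have hwx : HasFDerivAt w (fderiv ℝ w x) x := (hwd x).hasFDerivAt
    have hηx : HasFDerivAt η (fderiv ℝ η x) x :=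
      ((hη.differentiable (by decide)) x).hasFDerivAt
    have hΓx : HasFDerivAt (fun y => 1 + w y ^ 2) ((2 * w x) • fderiv ℝ w x) x := by
      have h := ((hasDerivAt_pow 2 (w x)).comp_hasFDerivAt x hwx).const_add 1
      have e : (2 * w x) = ((2:ℕ):ℝ) * w x ^ (2-1) := by norm_num
      rw [e]; exact h
    have hgx : HasFDerivAt (fun y => (1 + w y ^ 2) ^ α)
        ((α * (1 + w x ^ 2) ^ (α-1)) • ((2 * w x) • fderiv ℝ w x)) x :=
      hΓx.rpow_const (Or.inl (hΓpos x).ne')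
    have hpx : HasFDerivAt (fun y => η y ^ (2*l))
        ((↑(2*l) * η x ^ (2*l-1)) • fderiv ℝ η x) x :=
      (hasDerivAt_pow (2*l) (η x)).comp_hasFDerivAt x hηx
    have hmul := hgx.mul hwx
    have hφx := hpx.mul hmul
    have hfd : fderiv ℝ φ x = _ := hφx.fderiv
    show fderiv ℝ φ x (EuclideanSpace.single i 1) = _
    rw [hfd]
    simp only [ContinuousLinearMap.add_apply, ContinuousLinearMap.coe_smul',
      Pi.smul_apply, smul_eq_mul]
    show _ * (_ * fderiv ℝ w x _ + _ * (_ * (_ * fderiv ℝ w x _)))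
        + _ * (_ * fderiv ℝ η x _) = _ * pd i w x + _ * pd i η x
    simp only [pd]
    push_cast
    simp only [Pi.mul_apply]
    ring
  -- the flux functions P and Q
  set P : E2 → ℝ := fun y => δ * w y + deriv f₁ (w y) with hPdef
  set Q : E2 → ℝ := fun y => δ * v y + deriv f₂ (v y) with hQdef
  have hP' : ∀ x, HasFDerivAt P ((δ + deriv (deriv f₁) (w x)) • fderiv ℝ w x) x := by
    intro x
    have h1 : HasFDerivAt (fun y => δ * w y) (δ • fderiv ℝ w x) x :=
      ((hwd x).hasFDerivAt).const_mul δ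
    have h2 : HasFDerivAt (fun y => deriv f₁ (w y))
        (deriv (deriv f₁) (w x) • fderiv ℝ w x) x :=
      ((hdf₁ (w x)).hasDerivAt).comp_hasFDerivAt x ((hwd x).hasFDerivAt)
    have h := h1.add h2
    rw [add_smul]
    exact h
  have hQ' : ∀ x, HasFDerivAt Q ((δ + deriv (deriv f₂) (v x)) • fderiv ℝ v x) x := by
    intro x
    have h1 : HasFDerivAt (fun y => δ * v y) (δ • fderiv ℝ v x) x :=
      ((hvd x).hasFDerivAt).const_mul δ
    have h2 : HasFDerivAt (fun y => deriv f₂ (v y))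
        (deriv (deriv f₂) (v x) • fderiv ℝ v x) x :=
      ((hdf₂ (v x)).hasDerivAt).comp_hasFDerivAt x ((hvd x).hasFDerivAt)
    have h := h1.add h2
    rw [add_smul]
    exact h
  have hPd : ∀ (i : Fin 2) (x : E2), pd i P x = b1 x * pd i w x := by
    intro i x
    show fderiv ℝ P x (EuclideanSpace.single i 1) = _
    rw [(hP' x).fderiv]
    simp only [ContinuousLinearMap.coe_smul', Pi.smul_apply, smul_eq_mul, hb1def, pd]
  have hQd : ∀ (i : Fin 2) (x : E2), pd i Q x = b2 x * pd i v x := by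
    intro i x
    show fderiv ℝ Q x (EuclideanSpace.single i 1) = _
    rw [(hQ' x).fderiv]
    simp only [ContinuousLinearMap.coe_smul', Pi.smul_apply, smul_eq_mul, hb2def, pd]
  have hPdiff : Differentiable ℝ P := fun x => (hP' x).differentiableAt
  have hQdiff : Differentiable ℝ Q := fun x => (hQ' x).differentiableAt
  have hpdPc : ∀ i : Fin 2, Continuous (pd i P) := by
    intro i
    have : pd i P = fun x => b1 x * pd i w x := funext (hPd i)
    rw [this]
    exact hb1c.mul (pd_contDiff hw i).continuous
  have hpdQc : ∀ i : Fin 2, Continuous (pd i Q) := by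
    intro i
    have : pd i Q = fun x => b2 x * pd i v x := funext (hQd i)
    rw [this]
    exact hb2c.mul (pd_contDiff hv i).continuous
  -- Euler equation pointwise combination
  have hE : ∀ x : E2, (pd 0 P x + pd 1 Q x) * pd 0 φ x = 0 := by
    intro x
    by_cases hx : x ∈ Ω
    · have h := hEuler x hx
      have h0 : pd 0 P x + pd 1 Q x = 0 := by
        rw [hPd 0 x, hQd 1 x, hb1def, hb2def]
        beta_reduce
        linarith
      rw [h0, zero_mul]
    · have h0 : pd 0 φ x = 0 := pd_zero (fun hmem => hx (hφΩ hmem)) 0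
      rw [h0, mul_zero]
  -- integrability of all products used in the integration by parts
  have hint : ∀ (f : E2 → ℝ), Continuous f → (∀ x ∉ tsupport η, f x = 0) → Integrable f :=
    fun f hf h0 => integrable_aux hf hηc h0
  have int1 : Integrable (fun x => pd 0 P x * pd 0 φ x) :=
    hint _ ((hpdPc 0).mul (hφi 0).continuous) (fun x hx => by rw [hdφK 0 x hx, mul_zero])
  have int2 : Integrable (fun x => pd 1 Q x * pd 0 φ x) :=
    hint _ ((hpdQc 1).mul (hφi 0).continuous) (fun x hx => by rw [hdφK 0 x hx, mul_zero])
  have int3 : Integrable (fun x => Q x * pd 0 φ x) :=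
    hint _ (hQdiff.continuous.mul (hφi 0).continuous) (fun x hx => by rw [hdφK 0 x hx, mul_zero])
  have int4 : Integrable (fun x => Q x * pd 1 (pd 0 φ) x) :=
    hint _ (hQdiff.continuous.mul (pd_contDiff (hφi 0) 1).continuous)
      (fun x hx => by rw [hψK 1 0 x hx, mul_zero])
  have int5 : Integrable (fun x => Q x * pd 1 φ x) :=
    hint _ (hQdiff.continuous.mul (hφi 1).continuous) (fun x hx => by rw [hdφK 1 x hx, mul_zero])
  have int6 : Integrable (fun x => Q x * pd 0 (pd 1 φ) x) :=
    hint _ (hQdiff.continuous.mul (pd_contDiff (hφi 1) 0).continuous)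
      (fun x hx => by rw [hψK 0 1 x hx, mul_zero])
  have int7 : Integrable (fun x => pd 0 Q x * pd 1 φ x) :=
    hint _ ((hpdQc 0).mul (hφi 1).continuous) (fun x hx => by rw [hdφK 1 x hx, mul_zero])
  -- integration by parts
  have ibp1 : ∫ x, Q x * pd 1 (pd 0 φ) x = - ∫ x, pd 1 Q x * pd 0 φ x :=
    integral_mul_fderiv_eq_neg_fderiv_mul_of_integrable int2 int4 int3 (fun x _ => hQdiff x)
      (fun x _ => (hφi 0).differentiable (by decide) x)
  have hsymφ : (fun x => Q x * pd 1 (pd 0 φ) x) = (fun x => Q x * pd 0 (pd 1 φ) x) :=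
    funext fun x => by rw [pd_symm hφ 1 0 x]
  have ibp2 : ∫ x, Q x * pd 0 (pd 1 φ) x = - ∫ x, pd 0 Q x * pd 1 φ x :=
    integral_mul_fderiv_eq_neg_fderiv_mul_of_integrable int7 int6 int5 (fun x _ => hQdiff x)
      (fun x _ => (hφi 1).differentiable (by decide) x)
  have h00 : ∫ x, (pd 0 P x * pd 0 φ x + pd 1 Q x * pd 0 φ x) = 0 := by
    have h : (fun x => pd 0 P x * pd 0 φ x + pd 1 Q x * pd 0 φ x) = fun _ => 0 :=
      funext fun x => by rw [← add_mul]; exact hE x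
    rw [h, integral_zero]
  have hsplit := integral_add int1 int2
  -- the weak form of the differentiated equation tested with φ
  have key0 : ∫ x, (b1 x * pd 0 w x * pd 0 φ x + b2 x * pd 1 w x * pd 1 φ x) = 0 := by
    have e1 : (fun x => b1 x * pd 0 w x * pd 0 φ x) = fun x => pd 0 P x * pd 0 φ x :=
      funext fun x => by rw [hPd 0 x]
    have e2 : (fun x => b2 x * pd 1 w x * pd 1 φ x) = fun x => pd 0 Q x * pd 1 φ x := by
      funext x
      rw [hQd 0 x]
      congr 1
      rw [hvdef, hwdef, pd_symm hu 0 1 x]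
    have intb1 : Integrable (fun x => b1 x * pd 0 w x * pd 0 φ x) := by rw [e1]; exact int1
    have intb2 : Integrable (fun x => b2 x * pd 1 w x * pd 1 φ x) := by rw [e2]; exact int7
    rw [integral_add intb1 intb2, e1, e2]
    have hQ2 : ∫ x, pd 1 Q x * pd 0 φ x = ∫ x, pd 0 Q x * pd 1 φ x := by
      rw [hsymφ] at ibp1
      linarith [ibp1, ibp2]
    rw [h00] at hsplit
    linarith [hsplit, hQ2]
  -- the four integrands
  set L : E2 → ℝ := fun x =>
    (b1 x * pd 0 w x ^ 2 + b2 x * pd 1 w x ^ 2) * η x ^ (2*l) * (1 + w x ^ 2) ^ α with hLdef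
  set S : E2 → ℝ := fun x =>
    (b1 x * pd 0 w x ^ 2 + b2 x * pd 1 w x ^ 2) * η x ^ (2*l) *
      ((1 + w x ^ 2) ^ α + 2*α*(1 + w x ^ 2) ^ (α-1) * w x ^ 2) with hSdef
  set T : E2 → ℝ := fun x =>
    (2*(l:ℝ) * η x ^ (2*l-1) * (1 + w x ^ 2) ^ α * w x) *
      (b1 x * pd 0 w x * pd 0 η x + b2 x * pd 1 w x * pd 1 η x) with hTdef
  set G : E2 → ℝ := fun x =>
    (b1 x * pd 0 η x ^ 2 + b2 x * pd 1 η x ^ 2) * η x ^ (2*l-2) * (1 + w x ^ 2) ^ (α+1) with hGdef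
  have hsum : ∀ x : E2,
      b1 x * pd 0 w x * pd 0 φ x + b2 x * pd 1 w x * pd 1 φ x = S x + T x := by
    intro x
    rw [hdφ 0 x, hdφ 1 x]
    simp only [hSdef, hTdef]
    ring
  -- integrability
  have intL : Integrable L := by
    apply hint _ (((hb1c.mul ((pd_contDiff hw 0).continuous.pow 2)).add
      (hb2c.mul ((pd_contDiff hw 1).continuous.pow 2))).mul (hη.continuous.pow (2*l)) |>.mul
      (hgc α))
    intro x hx
    simp [hLdef, hηK x hx, zero_pow (by omega : 2*l ≠ 0)]
  have intS : Integrable S := by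
    apply hint _ (((hb1c.mul ((pd_contDiff hw 0).continuous.pow 2)).add
      (hb2c.mul ((pd_contDiff hw 1).continuous.pow 2))).mul (hη.continuous.pow (2*l)) |>.mul
      ((hgc α).add ((continuous_const.mul (hgc (α-1))).mul (hw.continuous.pow 2))))
    intro x hx
    simp [hSdef, hηK x hx, zero_pow (by omega : 2*l ≠ 0)]
  have intT : Integrable T := by
    apply hint _ ((((continuous_const.mul (hη.continuous.pow (2*l-1))).mul (hgc α)).mul
      hw.continuous).mul (((hb1c.mul (pd_contDiff hw 0).continuous).mul
        (pd_contDiff hη 0).continuous).add ((hb2c.mul (pd_contDiff hw 1).continuous).mul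
        (pd_contDiff hη 1).continuous)))
    intro x hx
    simp [hTdef, hηK x hx, zero_pow (by omega : 2*l-1 ≠ 0)]
  have intG : Integrable G := by
    apply hint _ (((hb1c.mul ((pd_contDiff hη 0).continuous.pow 2)).add
      (hb2c.mul ((pd_contDiff hη 1).continuous.pow 2))).mul (hη.continuous.pow (2*l-2)) |>.mul
      (hgc (α+1)))
    intro x hx
    simp [hGdef, hdηK 0 x hx, hdηK 1 x hx]
  -- pointwise inequalities
  have hLS : ∀ x : E2, L x ≤ S x := by
    intro x
    simp only [hLdef, hSdef]
    have h1 : 0 ≤ b1 x * pd 0 w x ^ 2 + b2 x * pd 1 w x ^ 2 :=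
      add_nonneg (mul_nonneg (hb10 x) (sq_nonneg _)) (mul_nonneg (hb20 x) (sq_nonneg _))
    have h2 : (0:ℝ) ≤ η x ^ (2*l) := pow_nonneg (hη0 x) _
    have h3 : (0:ℝ) ≤ (1 + w x ^ 2) ^ (α-1) := Real.rpow_nonneg (hΓpos x).le _
    nlinarith [mul_nonneg (mul_nonneg h1 h2)
      (mul_nonneg (mul_nonneg (by linarith : (0:ℝ) ≤ 2*α) h3) (sq_nonneg (w x)))]
  have hTG : ∀ x : E2, |T x| ≤ 1/2 * L x + 2*(l:ℝ)^2 * G x := by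
    intro x
    have e1 : 2*l-1 = l + (l-1) := by omega
    have e2 : 2*l = l + l := by omega
    have e3 : 2*l-2 = (l-1) + (l-1) := by omega
    have hgΓ : (1 + w x ^ 2) ^ (α+1) = (1 + w x ^ 2) ^ α * (1 + w x ^ 2) := by
      rw [Real.rpow_add (hΓpos x), Real.rpow_one]
    have hg0 : (0:ℝ) ≤ (1 + w x ^ 2) ^ α := Real.rpow_nonneg (hΓpos x).le α
    have hww : w x ^ 2 ≤ 1 + w x ^ 2 := by linarith
    have y1 := young1 (l:ℝ) (b1 x) (pd 0 w x) (pd 0 η x) (η x ^ l) (η x ^ (l-1))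
      ((1 + w x ^ 2) ^ α) (1 + w x ^ 2) (w x) (hb10 x) hg0 hww
    have y2 := young1 (l:ℝ) (b2 x) (pd 1 w x) (pd 1 η x) (η x ^ l) (η x ^ (l-1))
      ((1 + w x ^ 2) ^ α) (1 + w x ^ 2) (w x) (hb20 x) hg0 hww
    have hsplitT : T x =
        2*(l:ℝ) * (η x ^ l * η x ^ (l-1)) * ((1 + w x ^ 2) ^ α) * w x *
          (b1 x * pd 0 w x * pd 0 η x)
        + 2*(l:ℝ) * (η x ^ l * η x ^ (l-1)) * ((1 + w x ^ 2) ^ α) * w x *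
          (b2 x * pd 1 w x * pd 1 η x) := by
      simp only [hTdef, e1, pow_add]
      ring
    rw [hsplitT]
    refine (abs_add_le _ _).trans ?_
    refine (add_le_add y1 y2).trans ?_
    apply le_of_eq
    simp only [hLdef, hGdef, hgΓ]
    rw [e3, e2]
    simp only [pow_add]
    ring
  -- assembling the integral inequalities
  have hST : ∫ x, S x = - ∫ x, T x := by
    have hadd := integral_add intS intT
    have he : (fun x => S x + T x)
        = fun x => b1 x * pd 0 w x * pd 0 φ x + b2 x * pd 1 w x * pd 1 φ x :=
      funext fun x => (hsum x).symm
    rw [he, key0] at hadd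
    linarith
  have step1 : ∫ x, L x ≤ ∫ x, S x := integral_mono intL intS hLS
  have habs : - ∫ x, T x ≤ ∫ x, |T x| := by
    have h1 : |∫ x, T x| ≤ ∫ x, |T x| := by
      simpa [Real.norm_eq_abs] using norm_integral_le_integral_norm (μ := volume) T
    linarith [neg_le_abs (∫ x, T x)]
  have step3 : ∫ x, |T x| ≤ ∫ x, (1/2 * L x + 2*(l:ℝ)^2 * G x) :=
    integral_mono intT.abs ((intL.const_mul _).add (intG.const_mul _)) hTG
  have step4 : ∫ x, (1/2 * L x + 2*(l:ℝ)^2 * G x)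
      = 1/2 * (∫ x, L x) + 2*(l:ℝ)^2 * ∫ x, G x := by
    rw [integral_add (intL.const_mul _) (intG.const_mul _), integral_const_mul,
      integral_const_mul]
  -- converting the set integrals
  have EL : (∫ x in Ω,
      (δ * (pd 0 w x ^ 2 + pd 1 w x ^ 2)
        + deriv (deriv f₁) (w x) * pd 0 w x ^ 2
        + deriv (deriv f₂) (v x) * pd 1 w x ^ 2)
      * η x ^ (2 * l) * (1 + w x ^ 2) ^ α) = ∫ x, L x := by
    have h0 : ∀ x ∉ Ω,
        (δ * (pd 0 w x ^ 2 + pd 1 w x ^ 2)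
          + deriv (deriv f₁) (w x) * pd 0 w x ^ 2
          + deriv (deriv f₂) (v x) * pd 1 w x ^ 2)
        * η x ^ (2 * l) * (1 + w x ^ 2) ^ α = 0 := by
      intro x hx
      have hx' : x ∉ tsupport η := fun h => hx (hηs h)
      simp [hηK x hx', zero_pow (by omega : 2*l ≠ 0)]
    rw [setIntegral_eq_integral_of_forall_compl_eq_zero h0]
    have he : (fun x =>
        (δ * (pd 0 w x ^ 2 + pd 1 w x ^ 2)
          + deriv (deriv f₁) (w x) * pd 0 w x ^ 2
          + deriv (deriv f₂) (v x) * pd 1 w x ^ 2)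
        * η x ^ (2 * l) * (1 + w x ^ 2) ^ α) = L := by
      funext x
      simp only [hLdef, hb1def, hb2def]
      ring
    rw [he]
  have EG : (∫ x in Ω,
      (δ * (pd 0 η x ^ 2 + pd 1 η x ^ 2)
        + deriv (deriv f₁) (w x) * pd 0 η x ^ 2
        + deriv (deriv f₂) (v x) * pd 1 η x ^ 2)
      * η x ^ (2 * l - 2) * (1 + w x ^ 2) ^ (α + 1)) = ∫ x, G x := by
    have h0 : ∀ x ∉ Ω,
        (δ * (pd 0 η x ^ 2 + pd 1 η x ^ 2)
          + deriv (deriv f₁) (w x) * pd 0 η x ^ 2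
          + deriv (deriv f₂) (v x) * pd 1 η x ^ 2)
        * η x ^ (2 * l - 2) * (1 + w x ^ 2) ^ (α + 1) = 0 := by
      intro x hx
      have hx' : x ∉ tsupport η := fun h => hx (hηs h)
      simp [hdηK 0 x hx', hdηK 1 x hx']
    rw [setIntegral_eq_integral_of_forall_compl_eq_zero h0]
    have he : (fun x =>
        (δ * (pd 0 η x ^ 2 + pd 1 η x ^ 2)
          + deriv (deriv f₁) (w x) * pd 0 η x ^ 2
          + deriv (deriv f₂) (v x) * pd 1 η x ^ 2)
        * η x ^ (2 * l - 2) * (1 + w x ^ 2) ^ (α + 1)) = G := by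
      funext x
      simp only [hGdef, hb1def, hb2def]
      ring
    rw [he]
  rw [EL, EG]
  linarith [step1, hST, habs, step3, step4]
end

section
/- Let Ω ⊆ ℝ² be a bounded open set and u : Ω → ℝ a smooth function with |u| ≤ M on Ω for some M > 0. Set Γ₁ := 1 + (∂₁u)². Then for every s ≥ 0 and every integer l ≥ 1 there is a constant c > 0 depending only on M, s, l, such that for every η ∈ C_c^∞(Ω) with 0 ≤ η ≤ 1: ∫_Ω |∂₁u|² Γ₁^{s} η^{2l} dx ≤ c [ ∫_Ω |∂₁₁u| Γ₁^{s} η^{2l} dx + ∫_Ω |∇η|² η^{2l−2} Γ₁^{s} dx ]. -/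
open Real MeasureTheory

lemma contDiff_pd {v : EuclideanSpace ℝ (Fin 2) → ℝ} (hv : ContDiff ℝ (⊤:ℕ∞) v) (i : Fin 2) :
    ContDiff ℝ (⊤:ℕ∞) (pd i v) :=
  (hv.fderiv_right (by exact_mod_cast le_top)).clm_apply contDiff_const

lemma pd_eq_zero_of_nmem {v : EuclideanSpace ℝ (Fin 2) → ℝ} {x} (i : Fin 2)
    (hx : x ∉ tsupport v) : pd i v x = 0 := by
  have : fderiv ℝ v x = 0 := by
    by_contra h
    exact hx (support_fderiv_subset ℝ (Function.mem_support.2 h))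
  simp [pd, this]

lemma hasDerivAt_phi (s t : ℝ) :
    HasDerivAt (fun t : ℝ ↦ t * (1+t^2)^s)
      ((1+t^2)^s + 2*s*t^2*(1+t^2)^(s-1)) t := by
  have h1 : HasDerivAt (fun t:ℝ ↦ 1+t^2) (2*t) t := by
    simpa using (hasDerivAt_pow 2 t).const_add 1
  have h2 : HasDerivAt (fun t:ℝ ↦ (1+t^2)^s) (2*t*s*(1+t^2)^(s-1)) t :=
    h1.rpow_const (Or.inl (by positivity))
  have h3 := (hasDerivAt_id t).fun_mul h2
  simp only [id_eq] at h3
  refine h3.congr_deriv ?_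
  ring

lemma pointwise_bound (M s : ℝ) (hM : 0 < M) (hs : 0 ≤ s) (l : ℕ) (hl : 1 ≤ l)
    (t Q e d U : ℝ) (he0'' : 0 ≤ e) (hU : |U| ≤ M) :
    |(((1+t^2)^s + 2*s*t^2*(1+t^2)^(s-1)) * Q * e^(2*l)
        + (t * (1+t^2)^s) * (((2*l:ℕ):ℝ)*e^(2*l-1)) * d) * U|
      ≤ M*(1+2*s)*(|Q| * (1+t^2)^s * e^(2*l)) + (1/2)*(t^2 * (1+t^2)^s * e^(2*l))
        + 2*(l:ℝ)^2*M^2*(d^2 * e^(2*l-2) * (1+t^2)^s) := by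
  set Γ : ℝ := (1+t^2)^s with hΓdef
  set Γ' : ℝ := (1+t^2)^(s-1) with hΓ'def
  have hpos : (0:ℝ) < 1 + t^2 := by positivity
  have hΓ0 : 0 ≤ Γ := Real.rpow_nonneg hpos.le s
  have hΓ'0 : 0 ≤ Γ' := Real.rpow_nonneg hpos.le _
  have hepow : ∀ n : ℕ, 0 ≤ e^n := fun n ↦ pow_nonneg he0'' n
  have hΓsplit : (1+t^2) * Γ' = Γ := by
    rw [hΓdef, hΓ'def]
    have h := Real.rpow_add hpos 1 (s-1)
    rw [show (1:ℝ) + (s-1) = s by ring, Real.rpow_one] at h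
    exact h.symm
  clear_value Γ Γ'
  have hφ' : |Γ + 2*s*t^2*Γ'| ≤ (1+2*s)*Γ := by
    rw [abs_of_nonneg (add_nonneg hΓ0
      (mul_nonneg (mul_nonneg (by linarith) (sq_nonneg t)) hΓ'0))]
    have h1 : t^2*Γ' ≤ (1+t^2)*Γ' :=
      mul_le_mul_of_nonneg_right (by linarith) hΓ'0
    have h2 : 2*s*(t^2*Γ') ≤ 2*s*((1+t^2)*Γ') :=
      mul_le_mul_of_nonneg_left h1 (by linarith)
    rw [hΓsplit] at h2
    linarith
  have hG : |(Γ + 2*s*t^2*Γ') * Q * e^(2*l) + (t * Γ) * (((2*l:ℕ):ℝ)*e^(2*l-1)) * d|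
      ≤ (1+2*s)*Γ* |Q| *e^(2*l) + |t| *Γ*(2*(l:ℝ)*e^(2*l-1))* |d| := by
    refine (abs_add_le _ _).trans ?_
    have h1 : |(Γ + 2*s*t^2*Γ') * Q * e^(2*l)| ≤ (1+2*s)*Γ* |Q| *e^(2*l) := by
      rw [abs_mul, abs_mul, abs_of_nonneg (hepow _)]
      exact mul_le_mul_of_nonneg_right
        (mul_le_mul_of_nonneg_right hφ' (abs_nonneg Q)) (hepow _)
    have h2 : |(t * Γ) * (((2*l:ℕ):ℝ)*e^(2*l-1)) * d| = |t| *Γ*(2*(l:ℝ)*e^(2*l-1))* |d| := by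
      rw [abs_mul, abs_mul, abs_mul, abs_of_nonneg hΓ0,
        abs_of_nonneg (mul_nonneg (by positivity) (hepow _))]
      push_cast
      ring
    rw [h2]
    exact add_le_add_left h1 _
  have hab : e^(2*l-1) = e^l * e^(l-1) := by rw [← pow_add]; congr 1; omega
  have he2l : e^(2*l) = (e^l)^2 := by rw [← pow_mul]; congr 1; omega
  have he2l2 : e^(2*l-2) = (e^(l-1))^2 := by rw [← pow_mul]; congr 1; omega
  have hyoung : M * (|t| *Γ*(2*(l:ℝ)*e^(2*l-1))* |d|)
      ≤ (1/2)*(t^2*Γ*e^(2*l)) + 2*(l:ℝ)^2*M^2*(d^2*e^(2*l-2)*Γ) := by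
    have key : 2*(l:ℝ)*M*((|t| *e^l)*(e^(l-1)* |d|))
        ≤ (1/2)*(|t| *e^l)^2 + 2*(l:ℝ)^2*M^2*(e^(l-1)* |d|)^2 := by
      nlinarith [sq_nonneg (|t| *e^l - 2*(l:ℝ)*M*(e^(l-1)* |d|))]
    have key2 := mul_le_mul_of_nonneg_right key hΓ0
    calc M * (|t| *Γ*(2*(l:ℝ)*e^(2*l-1))* |d|)
        = (2*(l:ℝ)*M*((|t| *e^l)*(e^(l-1)* |d|))) * Γ := by rw [hab]; ring
      _ ≤ ((1/2)*(|t| *e^l)^2 + 2*(l:ℝ)^2*M^2*(e^(l-1)* |d|)^2) * Γ := key2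
      _ = (1/2)*(t^2*Γ*e^(2*l)) + 2*(l:ℝ)^2*M^2*(d^2*e^(2*l-2)*Γ) := by
          rw [he2l, he2l2, mul_pow, mul_pow, sq_abs, sq_abs]; ring
  calc |((Γ + 2*s*t^2*Γ') * Q * e^(2*l) + (t * Γ) * (((2*l:ℕ):ℝ)*e^(2*l-1)) * d) * U|
      = |(Γ + 2*s*t^2*Γ') * Q * e^(2*l) + (t * Γ) * (((2*l:ℕ):ℝ)*e^(2*l-1)) * d| * |U| :=
        abs_mul _ _
    _ ≤ |(Γ + 2*s*t^2*Γ') * Q * e^(2*l) + (t * Γ) * (((2*l:ℕ):ℝ)*e^(2*l-1)) * d| * M :=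
        mul_le_mul_of_nonneg_left hU (abs_nonneg _)
    _ ≤ ((1+2*s)*Γ* |Q| *e^(2*l) + |t| *Γ*(2*(l:ℝ)*e^(2*l-1))* |d|) * M :=
        mul_le_mul_of_nonneg_right hG hM.le
    _ = M*(1+2*s)*(|Q| *Γ*e^(2*l)) + M*(|t| *Γ*(2*(l:ℝ)*e^(2*l-1))* |d|) := by ring
    _ ≤ M*(1+2*s)*(|Q| *Γ*e^(2*l)) + ((1/2)*(t^2*Γ*e^(2*l)) + 2*(l:ℝ)^2*M^2*(d^2*e^(2*l-2)*Γ)) := by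
        linarith
    _ = M*(1+2*s)*(|Q| *Γ*e^(2*l)) + (1/2)*(t^2*Γ*e^(2*l)) + 2*(l:ℝ)^2*M^2*(d^2*e^(2*l-2)*Γ) := by
        ring

/-- for bounded smooth `u` on a bounded open `Ω ⊆ ℝ²`, with `Γ₁ = 1 + (∂₁u)²`,
`∫ |∂₁u|² Γ₁^s η^{2l} ≤ c [∫ |∂₁₁u| Γ₁^s η^{2l} + ∫ |∇η|² η^{2l-2} Γ₁^s]`,
where `c = c(M, s, l)`. -/
theorem integration_by_parts_estimate
    (Ω : Set (EuclideanSpace ℝ (Fin 2))) (hΩo : IsOpen Ω) (hΩb : Bornology.IsBounded Ω)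
    (M : ℝ) (hM : 0 < M) (s : ℝ) (hs : 0 ≤ s) (l : ℕ) (hl : 1 ≤ l) :
    ∃ c : ℝ, 0 < c ∧
      ∀ (u : EuclideanSpace ℝ (Fin 2) → ℝ), ContDiff ℝ (⊤ : ℕ∞) u →
      (∀ x ∈ Ω, |u x| ≤ M) →
      ∀ (η : EuclideanSpace ℝ (Fin 2) → ℝ), ContDiff ℝ (⊤ : ℕ∞) η →
        HasCompactSupport η → tsupport η ⊆ Ω →
        (∀ x, 0 ≤ η x) → (∀ x, η x ≤ 1) →
      (∫ x in Ω, (pd 0 u x) ^ 2 * (1 + (pd 0 u x) ^ 2) ^ s * η x ^ (2 * l))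
      ≤ c * ((∫ x in Ω, |pd 0 (pd 0 u) x| * (1 + (pd 0 u x) ^ 2) ^ s * η x ^ (2 * l))
          + ∫ x in Ω, ((pd 0 η x) ^ 2 + (pd 1 η x) ^ 2) * η x ^ (2 * l - 2)
              * (1 + (pd 0 u x) ^ 2) ^ s) := by
  refine ⟨2*M*(1+2*s) + 4*(l:ℝ)^2*M^2, by positivity, ?_⟩
  intro u hu hub η hη hηc hηΩ hη0 hη1
  set e0 : EuclideanSpace ℝ (Fin 2) := EuclideanSpace.single 0 1 with he0
  set p : EuclideanSpace ℝ (Fin 2) → ℝ := pd 0 u with hpdef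
  set q : EuclideanSpace ℝ (Fin 2) → ℝ := pd 0 p with hqdef
  have hp : ContDiff ℝ (⊤:ℕ∞) p := contDiff_pd hu 0
  have hq : ContDiff ℝ (⊤:ℕ∞) q := contDiff_pd hp 0
  have hΓpos : ∀ x, (0:ℝ) < 1 + p x ^ 2 := fun x ↦ by positivity
  have hΓc : Continuous (fun x ↦ (1 + p x ^ 2) ^ s) :=
    (continuous_const.add ((hp.continuous).pow 2)).rpow_const
      (fun x ↦ Or.inl (ne_of_gt (hΓpos x)))
  have hΓc' : Continuous (fun x ↦ (1 + p x ^ 2) ^ (s-1)) :=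
    (continuous_const.add ((hp.continuous).pow 2)).rpow_const
      (fun x ↦ Or.inl (ne_of_gt (hΓpos x)))
  -- the test function g for integration by parts
  set g : EuclideanSpace ℝ (Fin 2) → ℝ :=
    fun x ↦ (p x * (1 + p x ^ 2) ^ s) * η x ^ (2*l) with hgdef
  -- derivative of g
  have hgder : ∀ x, HasFDerivAt g
      ((p x * (1 + p x ^ 2) ^ s) • ((((2*l:ℕ):ℝ) * η x ^ (2*l-1)) • fderiv ℝ η x)
        + (η x ^ (2*l)) • (((1 + p x ^ 2) ^ s + 2*s*(p x)^2*(1 + p x ^ 2)^(s-1)) • fderiv ℝ p x)) x := by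
    intro x
    have hc : HasFDerivAt (fun y ↦ p y * (1 + p y ^ 2) ^ s)
        (((1 + p x ^ 2) ^ s + 2*s*(p x)^2*(1 + p x ^ 2)^(s-1)) • fderiv ℝ p x) x :=
      (hasDerivAt_phi s (p x)).comp_hasFDerivAt x
        ((hp.differentiable (by simp)) x).hasFDerivAt
    have hd : HasFDerivAt (fun y ↦ η y ^ (2*l))
        ((((2*l:ℕ):ℝ) * η x ^ (2*l-1)) • fderiv ℝ η x) x :=
      (hasDerivAt_pow (2*l) (η x)).comp_hasFDerivAt x
        ((hη.differentiable (by simp)) x).hasFDerivAt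
    exact hc.mul hd
  -- value of the partial derivative of g
  have hpd0g : ∀ x, fderiv ℝ g x e0 =
      ((1 + p x ^ 2) ^ s + 2*s*(p x)^2*(1 + p x ^ 2)^(s-1)) * q x * η x ^ (2*l)
      + (p x * (1 + p x ^ 2) ^ s) * (((2*l:ℕ):ℝ) * η x ^ (2*l-1)) * pd 0 η x := by
    intro x
    rw [(hgder x).fderiv]
    have hqx : fderiv ℝ p x e0 = q x := rfl
    have hηx : fderiv ℝ η x e0 = pd 0 η x := rfl
    simp only [ContinuousLinearMap.add_apply, ContinuousLinearMap.smul_apply, smul_eq_mul,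
      hqx, hηx]
    ring
  -- vanishing off the support of η
  have hη0' : ∀ x, x ∉ tsupport η → η x = 0 := fun x hx ↦ image_eq_zero_of_notMem_tsupport hx
  have h2l : 2*l ≠ 0 := by omega
  -- integrability helper
  have hint : ∀ f : EuclideanSpace ℝ (Fin 2) → ℝ, Continuous f →
      (∀ x, x ∉ tsupport η → f x = 0) → Integrable f := by
    intro f hf h0
    refine hf.integrable_of_hasCompactSupport (hηc.mono' ?_)
    intro x hx
    by_contra hxt
    exact hx (h0 x hxt)
  -- the three basic integrands
  set A : EuclideanSpace ℝ (Fin 2) → ℝ :=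
    fun x ↦ p x ^ 2 * (1 + p x ^ 2) ^ s * η x ^ (2*l) with hAdef
  set B : EuclideanSpace ℝ (Fin 2) → ℝ :=
    fun x ↦ |q x| * (1 + p x ^ 2) ^ s * η x ^ (2*l) with hBdef
  set C : EuclideanSpace ℝ (Fin 2) → ℝ :=
    fun x ↦ ((pd 0 η x) ^ 2 + (pd 1 η x) ^ 2) * η x ^ (2*l-2) * (1 + p x ^ 2) ^ s with hCdef
  set C1 : EuclideanSpace ℝ (Fin 2) → ℝ :=
    fun x ↦ (pd 0 η x) ^ 2 * η x ^ (2*l-2) * (1 + p x ^ 2) ^ s with hC1def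
  have hdη : ∀ i : Fin 2, Continuous (pd i η) := fun i ↦ (contDiff_pd hη i).continuous
  have hAint : Integrable A := by
    refine hint _ (((hp.continuous.pow 2).mul hΓc).mul (hη.continuous.pow _)) ?_
    intro x hx; simp [hAdef, hη0' x hx, zero_pow h2l]
  have hBint : Integrable B := by
    refine hint _ ((hq.continuous.abs.mul hΓc).mul (hη.continuous.pow _)) ?_
    intro x hx; simp [hBdef, hη0' x hx, zero_pow h2l]
  have hCint : Integrable C := by
    refine hint _ ((((((hdη 0).pow 2).add ((hdη 1).pow 2)).mul (hη.continuous.pow _)).mul hΓc)) ?_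
    intro x hx; simp [hCdef, pd_eq_zero_of_nmem 0 hx, pd_eq_zero_of_nmem 1 hx]
  have hC1int : Integrable C1 := by
    refine hint _ (((((hdη 0).pow 2).mul (hη.continuous.pow _)).mul hΓc)) ?_
    intro x hx; simp [hC1def, pd_eq_zero_of_nmem 0 hx]
  -- the set integrals in the statement are integrals over the whole space
  have hcompl : ∀ x, x ∉ Ω → x ∉ tsupport η := fun x hx hxt ↦ hx (hηΩ hxt)
  have hIA : ∫ x in Ω, A x = ∫ x, A x := by
    refine setIntegral_eq_integral_of_forall_compl_eq_zero (fun x hx ↦ ?_)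
    simp [hAdef, hη0' x (hcompl x hx), zero_pow h2l]
  have hIB : ∫ x in Ω, B x = ∫ x, B x := by
    refine setIntegral_eq_integral_of_forall_compl_eq_zero (fun x hx ↦ ?_)
    simp [hBdef, hη0' x (hcompl x hx), zero_pow h2l]
  have hIC : ∫ x in Ω, C x = ∫ x, C x := by
    refine setIntegral_eq_integral_of_forall_compl_eq_zero (fun x hx ↦ ?_)
    simp [hCdef, pd_eq_zero_of_nmem 0 (hcompl x hx), pd_eq_zero_of_nmem 1 (hcompl x hx)]
  rw [hIA, hIB, hIC]
  -- the explicit formula for ∂₁ g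
  set G : EuclideanSpace ℝ (Fin 2) → ℝ := fun x ↦
      ((1 + p x ^ 2) ^ s + 2*s*(p x)^2*(1 + p x ^ 2)^(s-1)) * q x * η x ^ (2*l)
      + (p x * (1 + p x ^ 2) ^ s) * (((2*l:ℕ):ℝ) * η x ^ (2*l-1)) * pd 0 η x with hGdef
  have hGcont : Continuous G := by
    refine (((hΓc.add ((continuous_const.mul (hp.continuous.pow 2)).mul hΓc')).mul
      hq.continuous).mul (hη.continuous.pow _)).add ?_
    exact ((hp.continuous.mul hΓc).mul (continuous_const.mul (hη.continuous.pow _))).mul (hdη 0)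
  have hG0 : ∀ x, x ∉ tsupport η → G x = 0 := by
    intro x hx
    simp [hGdef, hη0' x hx, pd_eq_zero_of_nmem 0 hx, zero_pow h2l]
  -- integration by parts
  have hudiff : Differentiable ℝ u := hu.differentiable (by simp)
  have hgdiff : Differentiable ℝ g := fun x ↦ (hgder x).differentiableAt
  have hGg : ∀ x, fderiv ℝ g x e0 = G x := hpd0g
  have hibp : ∫ x, g x * fderiv ℝ u x e0 = - ∫ x, fderiv ℝ g x e0 * u x := by
    refine integral_mul_fderiv_eq_neg_fderiv_mul_of_integrable ?_ ?_ ?_ (fun x _ ↦ hgdiff x) (fun x _ ↦ hudiff x)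
    · refine (hint _ (hGcont.mul hu.continuous) ?_).congr (Filter.Eventually.of_forall ?_)
      · intro x hx; simp [hG0 x hx]
      · intro x; simp only [hGg x, Pi.mul_apply]
    · refine hint _ (((hp.continuous.mul hΓc).mul (hη.continuous.pow _)).mul hp.continuous) ?_
      intro x hx; simp [hgdef, hη0' x hx, zero_pow h2l]
    · refine hint _ (((hp.continuous.mul hΓc).mul (hη.continuous.pow _)).mul hu.continuous) ?_
      intro x hx; simp [hgdef, hη0' x hx, zero_pow h2l]
  have hgu : ∀ x, g x * fderiv ℝ u x e0 = A x := by
    intro x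
    have h1 : fderiv ℝ u x e0 = p x := rfl
    simp only [h1, hgdef, hAdef]; ring
  have hA_eq : ∫ x, A x = - ∫ x, G x * u x := by
    have h1 : (fun x ↦ g x * fderiv ℝ u x e0) = A := funext hgu
    have h2 : (fun x ↦ fderiv ℝ g x e0 * u x) = (fun x ↦ G x * u x) :=
      funext fun x ↦ by rw [hGg x]
    rw [h1, h2] at hibp; exact hibp
  -- nonnegativity of the integrands
  have hA0 : ∀ x, 0 ≤ A x := fun x ↦
    mul_nonneg (mul_nonneg (sq_nonneg _) (Real.rpow_nonneg (by positivity) _))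
      (pow_nonneg (hη0 x) _)
  have hB0 : ∀ x, 0 ≤ B x := fun x ↦
    mul_nonneg (mul_nonneg (abs_nonneg _) (Real.rpow_nonneg (by positivity) _))
      (pow_nonneg (hη0 x) _)
  have hC0 : ∀ x, 0 ≤ C x := fun x ↦
    mul_nonneg (mul_nonneg (by positivity) (pow_nonneg (hη0 x) _))
      (Real.rpow_nonneg (by positivity) _)
  have hC10 : ∀ x, 0 ≤ C1 x := fun x ↦
    mul_nonneg (mul_nonneg (sq_nonneg _) (pow_nonneg (hη0 x) _))
      (Real.rpow_nonneg (by positivity) _)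
  -- pointwise bound
  have hpoint : ∀ x, |G x * u x| ≤ M*(1+2*s)*B x + (1/2)*A x + 2*(l:ℝ)^2*M^2*C1 x := by
    intro x
    by_cases hx : x ∈ Ω
    swap
    · have h0 : G x = 0 := hG0 x (hcompl x hx)
      rw [h0, zero_mul, abs_zero]
      have := hA0 x; have := hB0 x; have := hC10 x
      positivity
    simp only [hGdef, hBdef, hAdef, hC1def]
    exact pointwise_bound M s hM hs l hl (p x) (q x) (η x) (pd 0 η x) (u x)
      (hη0 x) (hub x hx)
  -- integral estimates
  have hGu_int : Integrable (fun x ↦ G x * u x) :=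
    hint _ (hGcont.mul hu.continuous) (fun x hx ↦ by simp [hG0 x hx])
  have habs : ∫ x, A x ≤ ∫ x, |G x * u x| := by
    rw [hA_eq]
    have hn := norm_integral_le_integral_norm (μ := volume) (fun x ↦ G x * u x)
    simp only [Real.norm_eq_abs] at hn
    exact (neg_le_abs _).trans hn
  have hmono : ∫ x, |G x * u x|
      ≤ ∫ x, (M*(1+2*s)*B x + (1/2)*A x + 2*(l:ℝ)^2*M^2*C1 x) := by
    refine integral_mono hGu_int.abs ?_ (fun x ↦ hpoint x)
    exact ((hBint.const_mul _).add (hAint.const_mul _)).add (hC1int.const_mul _)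
  have hsplit : ∫ x, (M*(1+2*s)*B x + (1/2)*A x + 2*(l:ℝ)^2*M^2*C1 x)
      = M*(1+2*s)*(∫ x, B x) + (1/2)*(∫ x, A x) + 2*(l:ℝ)^2*M^2*(∫ x, C1 x) := by
    have i1 : Integrable (fun x ↦ M*(1+2*s)*B x) := hBint.const_mul _
    have i2 : Integrable (fun x ↦ (1/2)*A x) := hAint.const_mul _
    have i3 : Integrable (fun x ↦ 2*(l:ℝ)^2*M^2*C1 x) := hC1int.const_mul _
    have hs1 := integral_add (μ := volume) (i1.add i2) i3
    have hs2 := integral_add (μ := volume) i1 i2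
    simp only [Pi.add_apply] at hs1
    rw [hs1, hs2, integral_const_mul, integral_const_mul, integral_const_mul]
  have hC1leC : ∫ x, C1 x ≤ ∫ x, C x := by
    refine integral_mono hC1int hCint (fun x ↦ ?_)
    simp only [hC1def, hCdef]
    have h1 : (pd 0 η x)^2 ≤ (pd 0 η x)^2 + (pd 1 η x)^2 := by nlinarith [sq_nonneg (pd 1 η x)]
    exact mul_le_mul_of_nonneg_right (mul_le_mul_of_nonneg_right h1 (pow_nonneg (hη0 x) _))
      (Real.rpow_nonneg (by positivity) _)
  have h1 : ∫ x, A x ≤ M*(1+2*s)*(∫ x, B x) + (1/2)*(∫ x, A x) + 2*(l:ℝ)^2*M^2*(∫ x, C1 x) :=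
    (habs.trans hmono).trans_eq hsplit
  have hBnn : 0 ≤ ∫ x, B x := integral_nonneg hB0
  have hCnn : 0 ≤ ∫ x, C x := integral_nonneg hC0
  have h2 : 2*(l:ℝ)^2*M^2*(∫ x, C1 x) ≤ 2*(l:ℝ)^2*M^2*(∫ x, C x) :=
    mul_le_mul_of_nonneg_left hC1leC (by positivity)
  have h3 : (0:ℝ) ≤ 4*(l:ℝ)^2*M^2 * (∫ x, B x) := mul_nonneg (by positivity) hBnn
  have h4 : (0:ℝ) ≤ 2*M*(1+2*s) * (∫ x, C x) := mul_nonneg (by positivity) hCnn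
  set IA := ∫ x, A x with hIA2
  set IB := ∫ x, B x with hIB2
  set IC := ∫ x, C x with hIC2
  set IC1 := ∫ x, C1 x with hIC12
  clear_value IA IB IC IC1
  have hring : (2*M*(1+2*s) + 4*(l:ℝ)^2*M^2) * (IB + IC)
      = 2*M*(1+2*s)*IB + 4*(l:ℝ)^2*M^2*IC
        + (4*(l:ℝ)^2*M^2 * IB + 2*M*(1+2*s) * IC) := by ring
  linarith
end
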